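/- Let X be an NPC space, let x ∈ X, and let g and h be isometries of X, with g hyperbolic and attracting point ξ. Then h stabilizes ξ if and only if the sequence rₙ = d(hgⁿx, gⁿx) is bounded over all n ≥ 0. Moreover, if h stabilizes ξ, then there exist a constant c_{g,x} (independent of h) and n₀ ∈ ℕ such that d(hgⁿx, gⁿx) ≤ d(hx, x) + c_{g,x} for all n ≥ n₀, where for fixed (g, x), n₀ can be bounded by a function of d(hx, x) of linear growth. -/

import Mathlib

open Filter Set Topology Pointwise MeasureTheory

section MetricDefs

variable {X : Type*} [MetricSpace X]

/-- `γ` restricted to `s` is a unit-speed geodesic (isometric embedding of `s ⊆ ℝ`). -/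
def IsGeodesicOn (γ : ℝ → X) (s : Set ℝ) : Prop :=
  ∀ u ∈ s, ∀ v ∈ s, dist (γ u) (γ v) = |u - v|

/-- A geodesic segment parametrized by arclength on `[a,b]`, from `x` to `y`. -/
def IsGeodesicSegment (γ : ℝ → X) (a b : ℝ) (x y : X) : Prop :=
  a ≤ b ∧ γ a = x ∧ γ b = y ∧ IsGeodesicOn γ (Set.Icc a b)

/-- A geodesic metric space: any two points are joined by a geodesic. -/
def GeodesicSpace (X : Type*) [MetricSpace X] : Prop :=
  ∀ x y : X, ∃ γ : ℝ → X, IsGeodesicSegment γ 0 (dist x y) x y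

/-- A geodesic ray (unit-speed on `[0,∞)`). -/
def IsGeodesicRay (γ : ℝ → X) : Prop := IsGeodesicOn γ (Set.Ici 0)

/-- A geodesic line (unit-speed on all of `ℝ`). -/
def IsGeodesicLine (γ : ℝ → X) : Prop := IsGeodesicOn γ Set.univ

/-- CAT(0) space, via the CN (Bruhat–Tits) inequality, equivalent to the CAT(0)
comparison-triangle inequality for geodesic spaces. -/
def CAT0 (X : Type*) [MetricSpace X] : Prop :=
  GeodesicSpace X ∧ ∀ x y z m : X, dist y m = dist y z / 2 → dist z m = dist y z / 2 →
    dist x m ^ 2 ≤ (dist x y ^ 2 + dist x z ^ 2) / 2 - dist y z ^ 2 / 4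

/-- All geodesic triangles are `δ`-thin: each point on one side lies within `δ` of the
union of the other two sides. -/
def SlimTriangles (X : Type*) [MetricSpace X] (δ : ℝ) : Prop :=
  ∀ (x y z : X) (γ₁ γ₂ γ₃ : ℝ → X),
    IsGeodesicSegment γ₁ 0 (dist x y) x y →
    IsGeodesicSegment γ₂ 0 (dist y z) y z →
    IsGeodesicSegment γ₃ 0 (dist z x) z x →
    ∀ s ∈ Set.Icc (0:ℝ) (dist x y),
      ∃ p ∈ γ₂ '' Set.Icc (0:ℝ) (dist y z) ∪ γ₃ '' Set.Icc (0:ℝ) (dist z x),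
        dist (γ₁ s) p ≤ δ

/-- Gromov `δ`-hyperbolic (δ-thin geodesic triangles). -/
def GromovHyperbolic (X : Type*) [MetricSpace X] (δ : ℝ) : Prop :=
  0 ≤ δ ∧ SlimTriangles X δ

/-- An NPC space: a geodesic space that is either complete CAT(0), or proper and
Gromov-hyperbolic. -/
def NPCSpace (X : Type*) [MetricSpace X] : Prop :=
  GeodesicSpace X ∧
    ((CompleteSpace X ∧ CAT0 X) ∨ (ProperSpace X ∧ ∃ δ : ℝ, GromovHyperbolic X δ))

/-- Uniquely geodesic space. -/
def UniquelyGeodesic (X : Type*) [MetricSpace X] : Prop :=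
  ∀ (x y : X) (γ₁ γ₂ : ℝ → X), IsGeodesicSegment γ₁ 0 (dist x y) x y →
    IsGeodesicSegment γ₂ 0 (dist x y) x y → ∀ t ∈ Set.Icc (0:ℝ) (dist x y), γ₁ t = γ₂ t

/-- Two rays are asymptotic: they stay at bounded distance. -/
def AsympRays (γ₁ γ₂ : ℝ → X) : Prop :=
  ∃ C : ℝ, ∀ t : ℝ, 0 ≤ t → dist (γ₁ t) (γ₂ t) ≤ C

/-- The boundary points of the rays `γ₁, γ₂` are opposite: some geodesic line has
`γ₁`'s class as backward endpoint and `γ₂`'s class as forward endpoint. -/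
def OppositeEnds (γ₁ γ₂ : ℝ → X) : Prop :=
  ∃ L : ℝ → X, IsGeodesicLine L ∧ AsympRays (fun t => L (-t)) γ₁ ∧ AsympRays L γ₂

/-- The sequence `x` converges to the boundary point represented by the ray `γ`:
it goes to infinity and geodesic segments from `γ 0` to `x n` eventually fellow-travel
`γ` within a uniform bound (this is convergence in the cone topology for CAT(0) spaces,
and Gromov convergence for hyperbolic spaces). -/
def ConvergesToEnd (x : ℕ → X) (γ : ℝ → X) : Prop :=
  Tendsto (fun n => dist (γ 0) (x n)) atTop atTop ∧
  ∃ C : ℝ, ∀ t : ℝ, 0 ≤ t → ∀ σ : ℕ → ℝ → X,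
    (∀ n, IsGeodesicSegment (σ n) 0 (dist (γ 0) (x n)) (γ 0) (x n)) →
    ∀ᶠ n in atTop, dist (σ n t) (γ t) ≤ C

/-- Geodesically convex subset. -/
def GeodesicallyConvex (Y : Set X) : Prop :=
  ∀ x ∈ Y, ∀ y ∈ Y, ∀ γ : ℝ → X, IsGeodesicSegment γ 0 (dist x y) x y →
    ∀ t ∈ Set.Icc (0:ℝ) (dist x y), γ t ∈ Y

/-- `Z` is an absorbing set for the boundary point of the ray `ρ` within `Y`. -/
def IsAbsorbing (Y Z : Set X) (ρ : ℝ → X) : Prop :=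
  ∃ r : ℝ → ℝ, Tendsto r atTop atTop ∧
    ∀ᶠ t in atTop, ∀ y ∈ Y, dist (ρ t) y ≤ r t → y ∈ Z

/-- The path (induced length) pseudo-distance inside a subset `T` of `X`. -/
noncomputable def pathDist (T : Set X) (x y : X) : ENNReal :=
  ⨅ (f : ℝ → X) (_ : ContinuousOn f (Set.Icc 0 1)) (_ : Set.MapsTo f (Set.Icc 0 1) T)
    (_ : f 0 = x) (_ : f 1 = y), eVariationOn f (Set.Icc 0 1)

end MetricDefs

section ActionDefs

variable {X : Type*} [MetricSpace X] {G : Type*} [Group G] [MulAction G X]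

/-- `G` acts on `X` by isometries. -/
def IsometricAction (G X : Type*) [Group G] [MetricSpace X] [MulAction G X] : Prop :=
  ∀ g : G, Isometry fun x : X => g • x

/-- The action of `G` on `X` is (metrically) proper. -/
def ProperAction (G X : Type*) [Group G] [TopologicalSpace G] [MetricSpace X]
    [MulAction G X] : Prop :=
  ∀ (x : X) (r : ℝ), IsCompact {g : G | dist (g • x) x ≤ r}

/-- The action of `G` on `X` is locally discrete: around each point, some ball of
positive radius has open pointwise fixator. -/
def BoundedElt (X : Type*) [MetricSpace X] {G : Type*} [Group G] [MulAction G X]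
    (g : G) : Prop :=
  ∀ x : X, Bornology.IsBounded (Set.range fun n : ℤ => g ^ n • x)

/-- The ray `γ` represents the attracting point of `g`: all forward orbits of `g`
converge to the corresponding boundary point. -/
def AttractsTo (g : G) (γ : ℝ → X) : Prop :=
  IsGeodesicRay γ ∧ ∀ x : X, ConvergesToEnd (fun n => g ^ n • x) γ

/-- `γ` is a (labelled) axis of `g`: `g` translates along the geodesic line `γ`. -/
def IsAxialWith (g : G) (γ : ℝ → X) : Prop :=
  IsGeodesicLine γ ∧ ∃ k : ℝ, 0 < k ∧ ∀ t : ℝ, g • γ t = γ (t + k)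

/-- `g` is an axial isometry of `X`. -/
def IsAxial (X : Type*) [MetricSpace X] {G : Type*} [Group G] [MulAction G X]
    (g : G) : Prop :=
  ∃ γ : ℝ → X, IsAxialWith g γ

/-- `n ↦ gⁿ • x` is a quasi-isometric embedding of `ℤ` into `X`. -/
def QIHyperbolic (X : Type*) [MetricSpace X] {G : Type*} [Group G] [MulAction G X]
    (g : G) : Prop :=
  ∃ (x : X) (a b : ℝ), 0 < a ∧ 0 ≤ b ∧ ∀ m n : ℤ,
    a⁻¹ * |(m : ℝ) - (n : ℝ)| - b ≤ dist (g ^ m • x) (g ^ n • x) ∧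
    dist (g ^ m • x) (g ^ n • x) ≤ a * |(m : ℝ) - (n : ℝ)| + b

/-- `g` acts as a hyperbolic isometry of the NPC space `X`: axial in the complete CAT(0)
case, QI-hyperbolic in the proper Gromov-hyperbolic case. -/
def IsHyperbolicIsom (X : Type*) [MetricSpace X] {G : Type*} [Group G] [MulAction G X]
    (g : G) : Prop :=
  (CompleteSpace X ∧ CAT0 X ∧ IsAxial X g) ∨
  (ProperSpace X ∧ (∃ δ : ℝ, GromovHyperbolic X δ) ∧ QIHyperbolic X g)

/-- Translation length of `g` on `X` (the limit of `d(x, gⁿx)/n`, realized as an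
infimum by subadditivity). -/
noncomputable def translationLength (X : Type*) [MetricSpace X] {G : Type*} [Group G]
    [MulAction G X] (g : G) : ℝ :=
  sInf {r : ℝ | ∃ (x : X) (n : ℕ), 0 < n ∧ r = dist x (g ^ n • x) / n}

/-- The stabilizer in `G` of the boundary point represented by the ray `γ`. -/
def endStabilizer (hiso : IsometricAction G X) (γ : ℝ → X) : Subgroup G where
  carrier := {g : G | AsympRays (fun t => g • γ t) γ}
  one_mem' := ⟨0, fun t _ => by simp⟩
  mul_mem' := by
    rintro a b ⟨Ca, hCa⟩ ⟨Cb, hCb⟩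
    refine ⟨Cb + Ca, fun t ht => ?_⟩
    have h1 : dist ((a * b) • γ t) (a • γ t) = dist (b • γ t) (γ t) := by
      rw [mul_smul]
      exact (hiso a).dist_eq _ _
    calc dist ((a * b) • γ t) (γ t)
        ≤ dist ((a * b) • γ t) (a • γ t) + dist (a • γ t) (γ t) := dist_triangle _ _ _
      _ ≤ Cb + Ca := add_le_add (h1 ▸ hCb t ht) (hCa t ht)
  inv_mem' := by
    rintro a ⟨Ca, hCa⟩
    refine ⟨Ca, fun t ht => ?_⟩
    have h1 : dist (a⁻¹ • γ t) (γ t) = dist (γ t) (a • γ t) := by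
      have := (hiso a).dist_eq (a⁻¹ • γ t) (γ t)
      simp only [smul_inv_smul] at this
      exact this.symm
    rw [h1, dist_comm]
    exact hCa t ht

/-- The setwise stabilizer of `Y ⊆ X` in `G`. -/
def setStabilizer (G : Type*) {X : Type*} [Group G] [MulAction G X] (Y : Set X) :
    Subgroup G where
  carrier := {g : G | ∀ y : X, y ∈ Y ↔ g • y ∈ Y}
  one_mem' := fun y => by simp
  mul_mem' := by
    intro a b ha hb y
    rw [mul_smul]
    exact (hb y).trans (ha (b • y))
  inv_mem' := by
    intro a ha y
    have := ha (a⁻¹ • y)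
    rw [smul_inv_smul] at this
    exact this.symm

/-- The pointwise fixator of `Y ⊆ X` in `G`. -/
def fixator (G : Type*) {X : Type*} [Group G] [MulAction G X] (Y : Set X) :
    Subgroup G where
  carrier := {g : G | ∀ y ∈ Y, g • y = y}
  one_mem' := fun y _ => one_smul _ y
  mul_mem' := by
    intro a b ha hb y hy
    rw [mul_smul, hb y hy, ha y hy]
  inv_mem' := by
    intro a ha y hy
    conv_lhs => rw [← ha y hy]
    rw [inv_smul_smul]

/-- The set of common fixed points in `X` of a set of group elements. -/
def fixedSet (X : Type*) {G : Type*} [Group G] [MulAction G X] (S : Set G) : Set X :=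
  {x : X | ∀ g ∈ S, g • x = x}

/-- The action is locally discrete: around each point there is a ball of positive
radius whose fixator is open. -/
def LocallyDiscreteAction (G X : Type*) [Group G] [TopologicalSpace G] [MetricSpace X]
    [MulAction G X] : Prop :=
  ∀ x : X, ∃ r : ℝ, 0 < r ∧ IsOpen ((fixator G (Metric.closedBall x r) : Set G))

end ActionDefs

section GroupDefs

variable {G : Type*} [Group G]

/-- The parabolic set of `g`: elements with relatively compact forward `g`-conjugation
orbit. -/
def parSet [TopologicalSpace G] (g : G) : Set G :=
  {x : G | IsCompact (closure (Set.range fun n : ℕ => g ^ n * x * (g ^ n)⁻¹))}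

/-- The contraction set of `g` modulo the subgroup `K`: elements whose forward
`g`-conjugation orbit converges to the trivial coset in `G ⧸ K`. -/
def conSet [TopologicalSpace G] (g : G) (K : Subgroup G) : Set G :=
  {x : G | Tendsto (fun n : ℕ => ((g ^ n * x * (g ^ n)⁻¹ : G) : G ⧸ K)) atTop
    (𝓝 ((1 : G) : G ⧸ K))}

/-- A compact open subgroup. -/
def CompactOpen [TopologicalSpace G] (U : Subgroup G) : Prop :=
  IsCompact (U : Set G) ∧ IsOpen (U : Set G)

/-- The displacement index `|gUg⁻¹ : U ∩ gUg⁻¹|`. -/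
noncomputable def scaleIndex (g : G) (U : Subgroup G) : ℕ :=
  U.relIndex (U.map (MulAut.conj g).toMonoidHom)

/-- The scale of `g`: minimum of `|gUg⁻¹ : U ∩ gUg⁻¹|` over compact open subgroups. -/
noncomputable def scale [TopologicalSpace G] (g : G) : ℕ :=
  sInf {n : ℕ | ∃ U : Subgroup G, CompactOpen U ∧ scaleIndex g U = n}

/-- `U` is a minimizing (tidy) compact open subgroup for `g`. -/
def IsMinimizing [TopologicalSpace G] (g : G) (U : Subgroup G) : Prop :=
  CompactOpen U ∧ scaleIndex g U = scale g

/-- For a t.d.l.c. group, the modular function satisfies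
`Δ(g) = |gUg⁻¹ : U ∩ gUg⁻¹| / |U : U ∩ gUg⁻¹|` for every compact open subgroup `U`.
`ModularEq g s` says that `Δ(g) = s`. -/
def ModularEq [TopologicalSpace G] (g : G) (s : ℕ) : Prop :=
  ∀ U : Subgroup G, CompactOpen U → scaleIndex g U = s * scaleIndex g⁻¹ U

/-- `U₊ = ⋂_{n ≥ 0} gⁿ U g⁻ⁿ`. -/
def Uplus (g : G) (U : Subgroup G) : Subgroup G :=
  ⨅ n : ℕ, U.map (MulAut.conj (g ^ n)).toMonoidHom

/-- `U₋ = ⋂_{n ≤ 0} gⁿ U g⁻ⁿ`. -/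
def Uminus (g : G) (U : Subgroup G) : Subgroup G :=
  ⨅ n : ℕ, U.map (MulAut.conj ((g ^ n)⁻¹)).toMonoidHom

/-- `U` is tidy for `g` (conditions TA and TB of Willis). -/
def TidyFor [TopologicalSpace G] (g : G) (U : Subgroup G) : Prop :=
  CompactOpen U ∧
  (U : Set G) = (Uplus g U : Set G) * (Uminus g U : Set G) ∧
  IsClosed (⋃ n : ℕ, (fun h : G => g ^ n * h * (g ^ n)⁻¹) '' (Uplus g U : Set G))

/-- The nub of `g`: intersection of all minimizing (tidy) subgroups for `g`. -/
noncomputable def nub [TopologicalSpace G] (g : G) : Subgroup G :=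
  ⨅ (U : Subgroup G) (_ : IsMinimizing g U), U

/-- The scale of an automorphism `α`: minimum of `|α(U) : α(U) ∩ U|` over compact open
subgroups. -/
noncomputable def scaleAut [TopologicalSpace G] (α : G ≃* G) : ℕ :=
  sInf {n : ℕ | ∃ U : Subgroup G, CompactOpen U ∧ U.relIndex (U.map α.toMonoidHom) = n}

end GroupDefs

section TreeDefs

variable {X : Type*} [MetricSpace X]

/-- `x ≤_T y`: some geodesic ray from `x` to the end of `ρ` contained in `T` passes
through `y`. -/
def leTree (T : Set X) (ρ : ℝ → X) (x y : X) : Prop :=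
  ∃ γ : ℝ → X, IsGeodesicRay γ ∧ γ 0 = x ∧ AsympRays γ ρ ∧ γ '' Set.Ici (0:ℝ) ⊆ T ∧
    ∃ t : ℝ, 0 ≤ t ∧ γ t = y

/-- The branching function of the tree `T` (with distinguished end given by `ρ`)
based at `x₀`. -/
noncomputable def branching (T : Set X) (ρ : ℝ → X) (x₀ : X) (m : ℝ) : ℕ :=
  if 0 < m then
    Nat.card {y : X | leTree T ρ y x₀ ∧ pathDist T x₀ y = ENNReal.ofReal m}
  else 1

end TreeDefs
section Helpers

variable {X : Type*} [MetricSpace X]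

lemma seg_dist {γ : ℝ → X} {A : ℝ} {x y : X} (h : IsGeodesicSegment γ 0 A x y) :
    dist x y = A := by
  obtain ⟨hA, h0, h1, hg⟩ := h
  rw [← h0, ← h1, hg 0 ⟨le_refl _, hA⟩ A ⟨hA, le_refl _⟩, abs_of_nonpos (by linarith)]
  ring

lemma seg_param {γ : ℝ → X} {A : ℝ} {x y : X} (h : IsGeodesicSegment γ 0 A x y)
    {u v : ℝ} (hu : u ∈ Set.Icc 0 A) (hv : v ∈ Set.Icc 0 A) :
    dist (γ u) (γ v) = |u - v| := h.2.2.2 u hu v hv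

lemma seg_reverse {γ : ℝ → X} {A : ℝ} {x y : X} (h : IsGeodesicSegment γ 0 A x y) :
    IsGeodesicSegment (fun t => γ (A - t)) 0 A y x := by
  obtain ⟨hA, h0, h1, hg⟩ := h
  refine ⟨hA, by simpa using h1, by simpa using h0, fun u hu v hv => ?_⟩
  rw [hg (A - u) ⟨by linarith [hu.2], by linarith [hu.1]⟩ (A - v)
      ⟨by linarith [hv.2], by linarith [hv.1]⟩]
  rw [show A - u - (A - v) = -(u - v) by ring, abs_neg]

lemma seg_map {Y : Type*} [MetricSpace Y] {f : X → Y} (hf : Isometry f)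
    {γ : ℝ → X} {A : ℝ} {x y : X} (h : IsGeodesicSegment γ 0 A x y) :
    IsGeodesicSegment (fun t => f (γ t)) 0 A (f x) (f y) := by
  obtain ⟨hA, h0, h1, hg⟩ := h
  exact ⟨hA, by simp [h0], by simp [h1], fun u hu v hv => by simpa [hf.dist_eq] using hg u hu v hv⟩

lemma line_seg {L : ℝ → X} (hL : IsGeodesicLine L) {T : ℝ} (hT : 0 ≤ T) :
    IsGeodesicSegment L 0 T (L 0) (L T) := by
  refine ⟨hT, rfl, rfl, fun u _ v _ => hL u trivial v trivial⟩

lemma ray_seg {L : ℝ → X} (hL : IsGeodesicRay L) {T : ℝ} (hT : 0 ≤ T) :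
    IsGeodesicSegment L 0 T (L 0) (L T) := by
  refine ⟨hT, rfl, rfl, fun u hu v hv => hL u hu.1 v hv.1⟩

lemma ray_dist {L : ℝ → X} (hL : IsGeodesicRay L) {u v : ℝ} (hu : 0 ≤ u) (hv : 0 ≤ v) :
    dist (L u) (L v) = |u - v| := hL u hu v hv

end Helpers
section CAT0Helpers

variable {X : Type*} [MetricSpace X]

/-- A bounded-above midpoint-convex continuous function vanishing at endpoints. -/
lemma midpoint_max (g : ℝ → ℝ) (hcont : ContinuousOn g (Set.Icc 0 1))
    (h0 : g 0 = 0) (h1 : g 1 = 0)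
    (hmid : ∀ u ∈ Set.Icc (0:ℝ) 1, ∀ v ∈ Set.Icc (0:ℝ) 1, g ((u + v) / 2) ≤ (g u + g v) / 2) :
    ∀ s ∈ Set.Icc (0:ℝ) 1, g s ≤ 0 := by
  obtain ⟨sm, hsm, hmax⟩ := isCompact_Icc.exists_isMaxOn (Set.nonempty_Icc.2 zero_le_one) hcont
  have gsm : g sm ≤ 0 := by
    rcases eq_or_lt_of_le hsm.1 with hq0 | hq0
    · rw [← hq0]; exact le_of_eq h0
    rcases eq_or_lt_of_le hsm.2 with hq1 | hq1
    · rw [hq1]; exact le_of_eq h1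
    · set ε := min sm (1 - sm) with hε
      have hε0 : 0 < ε := lt_min hq0 (by linarith)
      have e1 : ε ≤ sm := min_le_left _ _
      have e2 : ε ≤ 1 - sm := min_le_right _ _
      have hm1 : sm - ε ∈ Set.Icc (0:ℝ) 1 := ⟨by linarith, by linarith [hsm.2]⟩
      have hm2 : sm + ε ∈ Set.Icc (0:ℝ) 1 := ⟨by linarith [hsm.1], by linarith⟩
      have h := hmid _ hm1 _ hm2
      rw [show (sm - ε + (sm + ε)) / 2 = sm by ring] at h
      have c1 : g (sm - ε) ≤ g sm := hmax hm1
      have c2 : g (sm + ε) ≤ g sm := hmax hm2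
      rcases min_cases sm (1 - sm) with ⟨he, _⟩ | ⟨he, _⟩
      · have hz : sm - ε = 0 := by rw [hε, he]; ring
        rw [hz, h0] at h
        linarith
      · have hz : sm + ε = 1 := by rw [hε, he]; ring
        rw [hz, h1] at h
        linarith
  exact fun s hs => le_trans (hmax hs) gsm

/-- Two midpoints of segments with a common vertex. -/
lemma cat0_mid (hX : CAT0 X) {y₁ y₂ z m₁ m₂ : X}
    (h₁ : dist z m₁ = dist z y₁ / 2) (h₁' : dist y₁ m₁ = dist z y₁ / 2)
    (h₂ : dist z m₂ = dist z y₂ / 2) (h₂' : dist y₂ m₂ = dist z y₂ / 2) :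
    dist m₁ m₂ ≤ dist y₁ y₂ / 2 := by
  have HA := hX.2 y₁ z y₂ m₂ h₂ h₂'
  have HB := hX.2 m₂ z y₁ m₁ h₁ h₁'
  have e1 : dist m₂ z = dist z y₂ / 2 := by rw [dist_comm]; exact h₂
  have e2 : dist m₂ y₁ = dist y₁ m₂ := dist_comm _ _
  have e3 : dist m₂ m₁ = dist m₁ m₂ := dist_comm _ _
  have e4 : dist y₁ z = dist z y₁ := dist_comm _ _
  rw [e1, e2, e3] at HB
  rw [e4] at HA
  have key : dist m₁ m₂ ^ 2 ≤ (dist y₁ y₂ / 2) ^ 2 := by nlinarith [HA, HB]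
  have := Real.sqrt_le_sqrt key
  rwa [Real.sqrt_sq dist_nonneg, Real.sqrt_sq (by positivity)] at this

/-- Midpoints of the sides of a "quadrilateral". -/
lemma cat0_quad (hX : CAT0 X) {p₁ p₂ q₁ q₂ mp mq : X}
    (hp : dist p₁ mp = dist p₁ p₂ / 2) (hp' : dist p₂ mp = dist p₁ p₂ / 2)
    (hq : dist q₁ mq = dist q₁ q₂ / 2) (hq' : dist q₂ mq = dist q₁ q₂ / 2) :
    dist mp mq ≤ (dist p₁ q₁ + dist p₂ q₂) / 2 := by
  obtain ⟨γ, hγ⟩ := hX.1 p₂ q₁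
  set R := γ (dist p₂ q₁ / 2) with hRdef
  have hd : (0:ℝ) ≤ dist p₂ q₁ := dist_nonneg
  have hmem : dist p₂ q₁ / 2 ∈ Set.Icc (0:ℝ) (dist p₂ q₁) := ⟨by linarith, by linarith⟩
  have hR1 : dist p₂ R = dist p₂ q₁ / 2 := by
    have h := seg_param hγ (u := 0) ⟨le_refl _, hd⟩ (v := dist p₂ q₁ / 2) hmem
    rw [hγ.2.1] at h
    rw [hRdef, h, abs_of_nonpos (by linarith)]; ring
  have hR2 : dist q₁ R = dist p₂ q₁ / 2 := by
    have h := seg_param hγ (u := dist p₂ q₁) ⟨hd, le_refl _⟩ (v := dist p₂ q₁ / 2) hmem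
    rw [hγ.2.2.1] at h
    rw [hRdef, h, abs_of_nonneg (by linarith)]; ring
  have step1 : dist mp R ≤ dist p₁ q₁ / 2 := by
    refine cat0_mid hX (z := p₂) (y₁ := p₁) (y₂ := q₁) ?_ ?_ hR1 hR2
    · rw [dist_comm p₂ p₁]; exact hp'
    · rw [dist_comm p₂ p₁]; exact hp
  have step2 : dist R mq ≤ dist p₂ q₂ / 2 := by
    refine cat0_mid hX (z := q₁) (y₁ := p₂) (y₂ := q₂) ?_ ?_ hq hq'
    · rw [dist_comm q₁ p₂]; exact hR2
    · rw [dist_comm q₁ p₂]; exact hR1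
  calc dist mp mq ≤ dist mp R + dist R mq := dist_triangle _ _ _
    _ ≤ dist p₁ q₁ / 2 + dist p₂ q₂ / 2 := add_le_add step1 step2
    _ = (dist p₁ q₁ + dist p₂ q₂) / 2 := by ring

/-- Convexity of the distance between two geodesics in a CAT(0) space. -/
lemma cat0_convex (hX : CAT0 X) {σ τ : ℝ → X} {A B : ℝ} {p q p' q' : X}
    (hσ : IsGeodesicSegment σ 0 A p q) (hτ : IsGeodesicSegment τ 0 B p' q') :
    ∀ s ∈ Set.Icc (0:ℝ) 1,
      dist (σ (s * A)) (τ (s * B)) ≤ (1 - s) * dist p p' + s * dist q q' := by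
  have hA : 0 ≤ A := hσ.1
  have hB : 0 ≤ B := hτ.1
  have hmem : ∀ s ∈ Set.Icc (0:ℝ) 1, s * A ∈ Set.Icc 0 A := fun s hs =>
    ⟨mul_nonneg hs.1 hA, by nlinarith [hs.1, hs.2]⟩
  have hmemB : ∀ s ∈ Set.Icc (0:ℝ) 1, s * B ∈ Set.Icc 0 B := fun s hs =>
    ⟨mul_nonneg hs.1 hB, by nlinarith [hs.1, hs.2]⟩
  have habsA : ∀ c : ℝ, |c * A| = |c| * A := fun c => by rw [abs_mul, abs_of_nonneg hA]
  have habsB : ∀ c : ℝ, |c * B| = |c| * B := fun c => by rw [abs_mul, abs_of_nonneg hB]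
  have habs2 : ∀ c : ℝ, |c / 2| = |c| / 2 := fun c => by
    rw [abs_div]; norm_num
  -- midpoint inequality for f
  have hmidf : ∀ s ∈ Set.Icc (0:ℝ) 1, ∀ t ∈ Set.Icc (0:ℝ) 1,
      dist (σ ((s + t) / 2 * A)) (τ ((s + t) / 2 * B))
        ≤ (dist (σ (s * A)) (τ (s * B)) + dist (σ (t * A)) (τ (t * B))) / 2 := by
    intro s hs t ht
    have hst : (s + t) / 2 ∈ Set.Icc (0:ℝ) 1 :=
      ⟨by linarith [hs.1, ht.1], by linarith [hs.2, ht.2]⟩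
    have dA : dist (σ (s * A)) (σ (t * A)) = |s - t| * A := by
      rw [seg_param hσ (hmem s hs) (hmem t ht),
        show s * A - t * A = (s - t) * A by ring, habsA]
    have dA1 : dist (σ (s * A)) (σ ((s + t) / 2 * A)) = dist (σ (s * A)) (σ (t * A)) / 2 := by
      rw [seg_param hσ (hmem s hs) (hmem _ hst), dA,
        show s * A - (s + t) / 2 * A = (s - t) * A / 2 by ring, habs2, habsA]
    have dA2 : dist (σ (t * A)) (σ ((s + t) / 2 * A)) = dist (σ (s * A)) (σ (t * A)) / 2 := by
      rw [seg_param hσ (hmem t ht) (hmem _ hst), dA,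
        show t * A - (s + t) / 2 * A = -((s - t) * A / 2) by ring, abs_neg, habs2, habsA]
    have dB : dist (τ (s * B)) (τ (t * B)) = |s - t| * B := by
      rw [seg_param hτ (hmemB s hs) (hmemB t ht),
        show s * B - t * B = (s - t) * B by ring, habsB]
    have dB1 : dist (τ (s * B)) (τ ((s + t) / 2 * B)) = dist (τ (s * B)) (τ (t * B)) / 2 := by
      rw [seg_param hτ (hmemB s hs) (hmemB _ hst), dB,
        show s * B - (s + t) / 2 * B = (s - t) * B / 2 by ring, habs2, habsB]
    have dB2 : dist (τ (t * B)) (τ ((s + t) / 2 * B)) = dist (τ (s * B)) (τ (t * B)) / 2 := by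
      rw [seg_param hτ (hmemB t ht) (hmemB _ hst), dB,
        show t * B - (s + t) / 2 * B = -((s - t) * B / 2) by ring, abs_neg, habs2, habsB]
    exact cat0_quad hX dA1 dA2 dB1 dB2
  -- Lipschitz estimate
  have hlip : ∀ s ∈ Set.Icc (0:ℝ) 1, ∀ t ∈ Set.Icc (0:ℝ) 1,
      |dist (σ (s * A)) (τ (s * B)) - dist (σ (t * A)) (τ (t * B))| ≤ (A + B) * |s - t| := by
    intro s hs t ht
    have h1 : dist (σ (s * A)) (σ (t * A)) = |s - t| * A := by
      rw [seg_param hσ (hmem s hs) (hmem t ht),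
        show s * A - t * A = (s - t) * A by ring, habsA]
    have h2 : dist (τ (s * B)) (τ (t * B)) = |s - t| * B := by
      rw [seg_param hτ (hmemB s hs) (hmemB t ht),
        show s * B - t * B = (s - t) * B by ring, habsB]
    have u1 : dist (σ (s * A)) (τ (s * B)) ≤
        dist (σ (t * A)) (τ (t * B)) + (A + B) * |s - t| := by
      calc dist (σ (s*A)) (τ (s*B))
          ≤ dist (σ (s*A)) (σ (t*A)) + dist (σ (t*A)) (τ (t*B)) + dist (τ (t*B)) (τ (s*B)) :=
            dist_triangle4 _ _ _ _
        _ = dist (σ (t*A)) (τ (t*B)) + (A + B) * |s - t| := by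
            rw [h1, dist_comm (τ (t*B)) (τ (s*B)), h2]; ring
    have u2 : dist (σ (t * A)) (τ (t * B)) ≤
        dist (σ (s * A)) (τ (s * B)) + (A + B) * |s - t| := by
      calc dist (σ (t*A)) (τ (t*B))
          ≤ dist (σ (t*A)) (σ (s*A)) + dist (σ (s*A)) (τ (s*B)) + dist (τ (s*B)) (τ (t*B)) :=
            dist_triangle4 _ _ _ _
        _ = dist (σ (s*A)) (τ (s*B)) + (A + B) * |s - t| := by
            rw [dist_comm (σ (t*A)) (σ (s*A)), h1, h2]; ring
    rw [abs_sub_le_iff]; exact ⟨by linarith, by linarith⟩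
  set g : ℝ → ℝ := fun s =>
    dist (σ (s * A)) (τ (s * B)) - ((1 - s) * dist p p' + s * dist q q') with hgdef
  have hcontg : ContinuousOn g (Set.Icc 0 1) := by
    apply ContinuousOn.sub
    · intro s hs
      apply Metric.continuousWithinAt_iff.2
      intro ε hε
      have hpos : (0:ℝ) < A + B + 1 := by linarith
      refine ⟨ε / (A + B + 1), by positivity, fun t ht hts => ?_⟩
      rw [Real.dist_eq] at hts ⊢
      calc |dist (σ (t * A)) (τ (t * B)) - dist (σ (s * A)) (τ (s * B))|
          ≤ (A + B) * |t - s| := hlip t ht s hs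
        _ ≤ (A + B + 1) * |t - s| := by nlinarith [abs_nonneg (t - s)]
        _ < (A + B + 1) * (ε / (A + B + 1)) := by
            exact mul_lt_mul_of_pos_left hts hpos
        _ = ε := by field_simp
    · exact (Continuous.continuousOn (by continuity))
  have g0 : g 0 = 0 := by
    show dist (σ (0 * A)) (τ (0 * B)) - ((1 - 0) * dist p p' + 0 * dist q q') = 0
    rw [zero_mul, zero_mul, hσ.2.1, hτ.2.1]; ring
  have g1 : g 1 = 0 := by
    show dist (σ (1 * A)) (τ (1 * B)) - ((1 - 1) * dist p p' + 1 * dist q q') = 0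
    rw [one_mul, one_mul, hσ.2.2.1, hτ.2.2.1]; ring
  have hmidg : ∀ u ∈ Set.Icc (0:ℝ) 1, ∀ v ∈ Set.Icc (0:ℝ) 1,
      g ((u + v) / 2) ≤ (g u + g v) / 2 := by
    intro u hu v hv
    have h2 := hmidf u hu v hv
    show dist (σ ((u + v) / 2 * A)) (τ ((u + v) / 2 * B))
        - ((1 - (u + v) / 2) * dist p p' + (u + v) / 2 * dist q q') ≤ _
    have : (g u + g v) / 2 = (dist (σ (u * A)) (τ (u * B)) + dist (σ (v * A)) (τ (v * B))) / 2
        - ((1 - (u + v) / 2) * dist p p' + (u + v) / 2 * dist q q') := by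
      simp only [hgdef]
      ring
    rw [this]
    linarith
  intro s hs
  have := midpoint_max g hcontg g0 g1 hmidg s hs
  have h2 : g s = dist (σ (s * A)) (τ (s * B)) - ((1 - s) * dist p p' + s * dist q q') := rfl
  linarith [h2 ▸ this]

end CAT0Helpers
section CAT0Main

variable {X G : Type*} [MetricSpace X] [Group G] [MulAction G X]

lemma cat0_main (hX : CAT0 X) (hiso : IsometricAction G X) {g : G} {L : ℝ → X}
    (hL : IsGeodesicLine L) {k : ℝ} (hk : 0 < k) (htr : ∀ t, g • L t = L (t + k))
    {γ : ℝ → X} (hattr : AttractsTo g γ) (x : X) :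
    (∀ h : G, AsympRays (fun t => h • γ t) γ ↔
      ∃ C : ℝ, ∀ n : ℕ, dist (h • (g ^ n • x)) (g ^ n • x) ≤ C) ∧
    (∀ h : G, AsympRays (fun t => h • γ t) γ →
      ∀ n : ℕ, dist (h • (g ^ n • x)) (g ^ n • x) ≤ dist (h • x) x + 4 * dist x (L 0)) := by
  obtain ⟨hray, hconv⟩ := hattr
  have hsmul : ∀ (h : G) (a b : X), dist (h • a) (h • b) = dist a b :=
    fun h a b => (hiso h).dist_eq a b
  have hLd : ∀ a b : ℝ, dist (L a) (L b) = |a - b| := fun a b => hL a trivial b trivial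
  have orb : ∀ n : ℕ, g ^ n • L 0 = L (n * k) := by
    intro n
    induction n with
    | zero => simp
    | succ n ih =>
        rw [pow_succ', mul_smul, ih, htr]
        congr 1; push_cast; ring
  obtain ⟨htend, C, hC⟩ := hconv (L 0)
  choose σ hσ using fun n => hX.1 (γ 0) (g ^ n • L 0)
  set d0 := dist (γ 0) (L 0) with hd0def
  have hd0 : 0 ≤ d0 := dist_nonneg
  -- the ray γ is uniformly close to the positive half of the axis L
  have hC' : ∀ t, 0 ≤ t → dist (γ t) (L t) ≤ C + d0 + 1 := by
    intro t ht
    have E1 : ∀ᶠ n in Filter.atTop, dist (σ n t) (γ t) ≤ C := hC t ht σ hσ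
    have E2 : ∀ᶠ n in Filter.atTop,
        max (max t 1) (t * d0) ≤ dist (γ 0) (g ^ n • L 0) :=
      htend.eventually_ge_atTop _
    obtain ⟨n, h1, h2⟩ := (E1.and E2).exists
    set dn := dist (γ 0) (g ^ n • L 0) with hdn
    have hdn1 : (1:ℝ) ≤ dn := le_trans (le_trans (le_max_right t 1) (le_max_left _ _)) h2
    have hdnt : t ≤ dn := le_trans (le_trans (le_max_left t 1) (le_max_left _ _)) h2
    have hdnd0 : t * d0 ≤ dn := le_trans (le_max_right _ _) h2
    have hdnpos : (0:ℝ) < dn := lt_of_lt_of_le one_pos hdn1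
    have hq : g ^ n • L 0 = L ((n:ℝ) * k) := orb n
    have hnk : (0:ℝ) ≤ (n:ℝ) * k := by positivity
    have hdLnk : dist (L 0) (L ((n:ℝ) * k)) = (n:ℝ) * k := by
      rw [hLd, abs_of_nonpos (by linarith)]; ring
    have hband : |(n:ℝ) * k - dn| ≤ d0 := by
      have a1 : dn ≤ d0 + (n:ℝ) * k := by
        calc dn = dist (γ 0) (L ((n:ℝ) * k)) := by rw [hdn, hq]
          _ ≤ dist (γ 0) (L 0) + dist (L 0) (L ((n:ℝ)*k)) := dist_triangle _ _ _
          _ = d0 + (n:ℝ) * k := by rw [hdLnk]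
      have a2 : (n:ℝ) * k ≤ d0 + dn := by
        calc (n:ℝ) * k = dist (L 0) (L ((n:ℝ)*k)) := hdLnk.symm
          _ ≤ dist (L 0) (γ 0) + dist (γ 0) (L ((n:ℝ)*k)) := dist_triangle _ _ _
          _ = d0 + dn := by rw [dist_comm (L 0) (γ 0), ← hd0def, hdn, hq]
      rw [abs_le]; constructor <;> linarith
    have hs : t / dn ∈ Set.Icc (0:ℝ) 1 :=
      ⟨div_nonneg ht hdnpos.le, (div_le_one hdnpos).2 hdnt⟩
    have hcv := cat0_convex hX (hσ n) (line_seg hL hnk) (t / dn) hs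
    have hdd : dist (γ 0) (L ((n:ℝ) * k)) = dn := by rw [hdn, hq]
    rw [hq, dist_self, hdd] at hcv
    have harg : t / dn * dn = t := div_mul_cancel₀ t hdnpos.ne'
    rw [harg] at hcv
    have hcv2 : dist (σ n t) (L (t / dn * ((n:ℝ) * k))) ≤ d0 := by
      refine hcv.trans ?_
      have : (1 - t/dn) ≤ 1 := by
        have : 0 ≤ t / dn := hs.1
        linarith
      nlinarith [hs.1, hs.2]
    have hthird : dist (L (t / dn * ((n:ℝ) * k))) (L t) ≤ 1 := by
      rw [hLd]
      have heq : t / dn * ((n:ℝ) * k) - t = t / dn * ((n:ℝ) * k - dn) := by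
        rw [mul_sub, harg]
      rw [heq, abs_mul, abs_of_nonneg hs.1]
      calc t / dn * |(n:ℝ) * k - dn| ≤ t / dn * d0 :=
            mul_le_mul_of_nonneg_left hband hs.1
        _ = t * d0 / dn := by ring
        _ ≤ 1 := (div_le_one hdnpos).2 hdnd0
    calc dist (γ t) (L t)
        ≤ dist (γ t) (σ n t) + dist (σ n t) (L (t / dn * ((n:ℝ)*k)))
          + dist (L (t / dn * ((n:ℝ)*k))) (L t) := dist_triangle4 _ _ _ _
      _ ≤ C + d0 + 1 := by
          rw [dist_comm (γ t) (σ n t)]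
          exact add_le_add (add_le_add h1 hcv2) hthird
  set C' := C + d0 + 1 with hC'def
  have hC'0 : 0 ≤ C' := le_trans dist_nonneg (hC' 0 le_rfl)
  -- displacement function along the axis
  have hFlip : ∀ (h : G) (s t : ℝ),
      dist (h • L t) (L t) ≤ dist (h • L s) (L s) + 2 * |t - s| := by
    intro h s t
    calc dist (h • L t) (L t)
        ≤ dist (h • L t) (h • L s) + dist (h • L s) (L s) + dist (L s) (L t) :=
          dist_triangle4 _ _ _ _
      _ = dist (h • L s) (L s) + 2 * |t - s| := by
          rw [hsmul, hLd, hLd, abs_sub_comm s t]; ring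
  -- h stabilizing ⇒ displacement along L is non-increasing
  have hnoninc : ∀ h : G, AsympRays (fun t => h • γ t) γ →
      ∀ t, 0 ≤ t → dist (h • L t) (L t) ≤ dist (h • L 0) (L 0) := by
    rintro h ⟨Ch, hCh⟩ t ht
    have hFb : ∀ u, 0 ≤ u → dist (h • L u) (L u) ≤ 2 * C' + Ch := by
      intro u hu
      calc dist (h • L u) (L u)
          ≤ dist (h • L u) (h • γ u) + dist (h • γ u) (γ u) + dist (γ u) (L u) :=
            dist_triangle4 _ _ _ _
        _ ≤ C' + Ch + C' := by
            refine add_le_add (add_le_add ?_ (hCh u hu)) (hC' u hu)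
            rw [hsmul, dist_comm]; exact hC' u hu
        _ = 2 * C' + Ch := by ring
    have hF0 : 0 ≤ dist (h • L 0) (L 0) := dist_nonneg
    have hM : 0 ≤ 2 * C' + Ch := le_trans dist_nonneg (hFb 0 le_rfl)
    refine le_of_forall_pos_le_add ?_
    intro ε hε
    set T := max t (t * (2 * C' + Ch) / ε + 1) with hT
    have hTt : t ≤ T := le_max_left _ _
    have hTpos : 0 < T ∨ t = 0 := by
      rcases eq_or_lt_of_le ht with h0 | h0
      · right; exact h0.symm
      · left; exact lt_of_lt_of_le h0 hTt
    rcases hTpos with hTpos | rfl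
    · have hT0 : 0 ≤ T := hTpos.le
      have hs : t / T ∈ Set.Icc (0:ℝ) 1 :=
        ⟨div_nonneg ht hT0, (div_le_one hTpos).2 hTt⟩
      have hσ1 : IsGeodesicSegment (fun u => h • L u) 0 T (h • L 0) (h • L T) :=
        seg_map (hiso h) (line_seg hL hT0)
      have hcv := cat0_convex hX hσ1 (line_seg hL hT0) (t / T) hs
      have harg : t / T * T = t := div_mul_cancel₀ t hTpos.ne'
      rw [harg] at hcv
      have hTe : t / T * (2 * C' + Ch) ≤ ε := by
        rw [div_mul_eq_mul_div, div_le_iff₀ hTpos]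
        have h2 : t * (2 * C' + Ch) / ε + 1 ≤ T := le_max_right _ _
        have h3 : t * (2 * C' + Ch) ≤ ε * (t * (2 * C' + Ch) / ε) := by
          rw [mul_div_assoc', mul_comm ε, mul_div_assoc, div_self hε.ne', mul_one]
        calc t * (2 * C' + Ch) ≤ ε * (t * (2*C'+Ch)/ε) := h3
          _ ≤ ε * T := by
              apply mul_le_mul_of_nonneg_left _ hε.le
              linarith
      calc dist (h • L t) (L t)
          ≤ (1 - t/T) * dist (h • L 0) (L 0) + t/T * dist (h • L T) (L T) := hcv
        _ ≤ dist (h • L 0) (L 0) + t/T * (2 * C' + Ch) := by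
            have := hFb T hT0
            nlinarith [hs.1, hs.2, hF0]
        _ ≤ dist (h • L 0) (L 0) + ε := by linarith
    · linarith
  set Dx := dist x (L 0) with hDx
  have hDx0 : 0 ≤ Dx := dist_nonneg
  -- distance from orbit point to axis point
  have horbx : ∀ n : ℕ, dist (g ^ n • x) (L ((n:ℝ) * k)) = Dx := by
    intro n
    rw [← orb n, hsmul]
  -- Part 2: the uniform bound for stabilizing h
  have part2 : ∀ h : G, AsympRays (fun t => h • γ t) γ →
      ∀ n : ℕ, dist (h • (g ^ n • x)) (g ^ n • x) ≤ dist (h • x) x + 4 * Dx := by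
    intro h hstab n
    have hnk : (0:ℝ) ≤ (n:ℝ) * k := by positivity
    have hF0 : dist (h • L 0) (L 0) ≤ dist (h • x) x + 2 * Dx := by
      calc dist (h • L 0) (L 0)
          ≤ dist (h • L 0) (h • x) + dist (h • x) x + dist x (L 0) := dist_triangle4 _ _ _ _
        _ = dist (h • x) x + 2 * Dx := by rw [hsmul, dist_comm (L 0) x]; ring
    calc dist (h • (g ^ n • x)) (g ^ n • x)
        ≤ dist (h • (g ^ n • x)) (h • L ((n:ℝ)*k)) + dist (h • L ((n:ℝ)*k)) (L ((n:ℝ)*k))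
          + dist (L ((n:ℝ)*k)) (g ^ n • x) := dist_triangle4 _ _ _ _
      _ ≤ Dx + (dist (h • x) x + 2 * Dx) + Dx := by
          refine add_le_add (add_le_add ?_ ((hnoninc h hstab _ hnk).trans hF0)) ?_
          · rw [hsmul]; exact le_of_eq (horbx n)
          · rw [dist_comm]; exact le_of_eq (horbx n)
      _ = dist (h • x) x + 4 * Dx := by ring
  constructor
  · intro h
    constructor
    · intro hstab
      exact ⟨dist (h • x) x + 4 * Dx, part2 h hstab⟩
    · rintro ⟨C₀, hC₀⟩
      refine ⟨2 * C' + (2 * Dx + C₀ + 2 * k), fun t ht => ?_⟩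
      set n := ⌈t / k⌉₊ with hn
      have htk : 0 ≤ t / k := div_nonneg ht hk.le
      have hub : t ≤ (n:ℝ) * k := by
        rw [hn]
        have := Nat.le_ceil (t / k)
        calc t = t / k * k := by field_simp
          _ ≤ (⌈t/k⌉₊ : ℝ) * k := mul_le_mul_of_nonneg_right this hk.le
      have hlb : (n:ℝ) * k ≤ t + k := by
        rw [hn]
        have := Nat.ceil_lt_add_one htk
        calc (⌈t/k⌉₊ : ℝ) * k ≤ (t/k + 1) * k := mul_le_mul_of_nonneg_right this.le hk.le
          _ = t + k := by field_simp
      have hFnk : dist (h • L ((n:ℝ)*k)) (L ((n:ℝ)*k)) ≤ 2 * Dx + C₀ := by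
        calc dist (h • L ((n:ℝ)*k)) (L ((n:ℝ)*k))
            ≤ dist (h • L ((n:ℝ)*k)) (h • (g ^ n • x)) + dist (h • (g ^ n • x)) (g ^ n • x)
              + dist (g ^ n • x) (L ((n:ℝ)*k)) := dist_triangle4 _ _ _ _
          _ ≤ Dx + C₀ + Dx := by
              refine add_le_add (add_le_add ?_ (hC₀ n)) (le_of_eq (horbx n))
              rw [hsmul, dist_comm]; exact le_of_eq (horbx n)
          _ = 2 * Dx + C₀ := by ring
      have hFt : dist (h • L t) (L t) ≤ 2 * Dx + C₀ + 2 * k := by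
        have := hFlip h ((n:ℝ)*k) t
        have habs : |t - (n:ℝ)*k| ≤ k := by
          rw [abs_le]; constructor <;> linarith
        nlinarith [hFnk]
      calc dist (h • γ t) (γ t)
          ≤ dist (h • γ t) (h • L t) + dist (h • L t) (L t) + dist (L t) (γ t) :=
            dist_triangle4 _ _ _ _
        _ ≤ C' + (2 * Dx + C₀ + 2 * k) + C' := by
            refine add_le_add (add_le_add ?_ hFt) ?_
            · rw [hsmul]; exact hC' t ht
            · rw [dist_comm (L t) (γ t)]; exact hC' t ht
        _ = 2 * C' + (2 * Dx + C₀ + 2 * k) := by ring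
  · exact part2

end CAT0Main
section HypHelpers

variable {X : Type*} [MetricSpace X]

/-- Two geodesics with common start stay 2δ-close before the divergence point. -/
lemma slim_common_start {δ : ℝ} (hGS : GeodesicSpace X) (hslim : SlimTriangles X δ)
    {α β : ℝ → X} {A B : ℝ} {p q q' : X}
    (hα : IsGeodesicSegment α 0 A p q) (hβ : IsGeodesicSegment β 0 B p q')
    {u : ℝ} (hu0 : 0 ≤ u) (huB : u ≤ B) (huA : u < A - δ - dist q q') :
    dist (α u) (β u) ≤ 2 * δ := by
  have hE : (0:ℝ) ≤ dist q q' := dist_nonneg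
  have hδ : 0 ≤ δ := by
    by_contra hcon
    push_neg at hcon
    obtain ⟨τ, hτ⟩ := hGS p p
    have := hslim p p p τ τ τ (by simpa using hτ) (by simpa using hτ) (by simpa using hτ)
      0 ⟨le_refl _, dist_nonneg⟩
    obtain ⟨P, _, hP2⟩ := this
    linarith [dist_nonneg (x := τ 0) (y := P)]
  have hA : dist p q = A := seg_dist hα
  have hB : dist p q' = B := seg_dist hβ
  have huA' : u ≤ A := by linarith
  obtain ⟨τ, hτ⟩ := hGS q q'
  have hβr : IsGeodesicSegment (fun t => β (B - t)) 0 (dist q' p) q' p := by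
    rw [dist_comm, hB]; exact seg_reverse hβ
  have hα' : IsGeodesicSegment α 0 (dist p q) p q := by rw [hA]; exact hα
  obtain ⟨P, hP, hdP⟩ := hslim p q q' α τ (fun t => β (B - t)) hα' hτ hβr
    u ⟨hu0, by rw [hA]; exact huA'⟩
  rcases hP with hP | hP
  · obtain ⟨s, hs, rfl⟩ := hP
    exfalso
    have h1 : dist (α u) q = A - u := by
      have := seg_param hα ⟨hu0, huA'⟩ ⟨le_of_lt (by linarith : (0:ℝ) < A), le_refl A⟩
      rw [hα.2.2.1] at this
      rw [this, abs_of_nonpos (by linarith)]; ring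
    have h2 : dist (τ s) q = s := by
      have := seg_param hτ hs ⟨le_refl _, dist_nonneg⟩
      rw [hτ.2.1] at this
      rw [this, sub_zero, abs_of_nonneg hs.1]
    have : A - u ≤ δ + dist q q' := by
      calc A - u = dist (α u) q := h1.symm
        _ ≤ dist (α u) (τ s) + dist (τ s) q := dist_triangle _ _ _
        _ ≤ δ + s := add_le_add hdP (le_of_eq h2)
        _ ≤ δ + dist q q' := by linarith [hs.2]
    linarith
  · obtain ⟨v, hv, rfl⟩ := hP
    rw [dist_comm q' p, hB] at hv
    set w := B - v with hw
    have hwmem : w ∈ Set.Icc (0:ℝ) B := ⟨by linarith [hv.2], by linarith [hv.1]⟩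
    have hαu : dist p (α u) = u := by
      have := seg_param hα ⟨le_refl _, by linarith⟩ ⟨hu0, huA'⟩
      rw [hα.2.1] at this
      rw [this, abs_of_nonpos (by linarith)]; ring
    have hβw : dist p (β w) = w := by
      have := seg_param hβ ⟨le_refl _, hβ.1⟩ hwmem
      rw [hβ.2.1] at this
      rw [this, abs_of_nonpos (by linarith [hwmem.1])]; ring
    have hd : dist (α u) (β w) ≤ δ := hdP
    have huw : |u - w| ≤ δ := by
      have := abs_dist_sub_le (α u) (β w) p
      rw [dist_comm (α u) p, dist_comm (β w) p, hαu, hβw] at this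
      exact le_trans this hd
    have : dist (β w) (β u) = |w - u| := seg_param hβ hwmem ⟨hu0, huB⟩
    calc dist (α u) (β u) ≤ dist (α u) (β w) + dist (β w) (β u) := dist_triangle _ _ _
      _ ≤ δ + |w - u| := add_le_add hd (le_of_eq this)
      _ ≤ δ + δ := by rw [abs_sub_comm]; linarith [huw]
      _ = 2 * δ := by ring

/-- Two geodesics with common endpoint, same parameter, stay close before the start. -/
lemma slim_common_end {δ : ℝ} (hGS : GeodesicSpace X) (hslim : SlimTriangles X δ)
    (hδ : 0 ≤ δ) {α β : ℝ → X} {A B : ℝ} {p p' q : X}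
    (hα : IsGeodesicSegment α 0 A p q) (hβ : IsGeodesicSegment β 0 B p' q)
    {t : ℝ} (h1 : δ + dist p p' < t) (h2 : t ≤ A) (h3 : t ≤ B) :
    dist (α t) (β t) ≤ 2 * δ + dist p p' := by
  have hE : (0:ℝ) ≤ dist p p' := dist_nonneg
  have ht0 : 0 ≤ t := by linarith
  have hA : dist p q = A := seg_dist hα
  have hB : dist p' q = B := seg_dist hβ
  have hAB : |A - B| ≤ dist p p' := by
    have := abs_dist_sub_le p p' q
    rwa [hA, hB] at this
  set v := A - t with hv
  have hv0 : 0 ≤ v := by linarith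
  have hvB : v ≤ B := by
    have : A - B ≤ dist p p' := le_trans (le_abs_self _) hAB
    linarith
  have hmain := slim_common_start hGS hslim (seg_reverse hα) (seg_reverse hβ)
    hv0 hvB (by linarith : v < A - δ - dist p p')
  -- hmain : dist (α (A - v)) (β (B - v)) ≤ 2δ
  have he1 : A - v = t := by rw [hv]; ring
  rw [he1] at hmain
  have hparam : dist (β (B - v)) (β t) = |B - v - t| := by
    refine seg_param hβ ⟨?_, ?_⟩ ⟨ht0, h3⟩
    · have : B - A ≤ dist p p' := by
        have := neg_abs_le (A - B)
        linarith [hAB]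
      linarith
    · linarith
  calc dist (α t) (β t) ≤ dist (α t) (β (B - v)) + dist (β (B - v)) (β t) := dist_triangle _ _ _
    _ ≤ 2 * δ + |B - v - t| := add_le_add hmain (le_of_eq hparam)
    _ ≤ 2 * δ + dist p p' := by
        have : B - v - t = B - A := by rw [hv]; ring
        rw [this, abs_sub_comm]
        linarith [hAB]

/-- Two geodesics with both endpoints moved stay close in the middle region. -/
lemma geodesics_close {δ : ℝ} (hGS : GeodesicSpace X) (hslim : SlimTriangles X δ)
    (hδ : 0 ≤ δ) {α β : ℝ → X} {A B : ℝ} {p q p' q' : X}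
    (hα : IsGeodesicSegment α 0 A p q) (hβ : IsGeodesicSegment β 0 B p' q')
    {t : ℝ} (h1 : δ + dist p p' < t) (h2 : t < A - δ - dist q q') (h3 : t ≤ B) :
    dist (α t) (β t) ≤ 4 * δ + dist p p' := by
  have hE1 : (0:ℝ) ≤ dist p p' := dist_nonneg
  have hE2 : (0:ℝ) ≤ dist q q' := dist_nonneg
  have ht0 : 0 ≤ t := by linarith
  obtain ⟨ν, hν⟩ := hGS p q'
  have hA : dist p q = A := seg_dist hα
  have hlen : |dist p q' - A| ≤ dist q q' := by
    have := abs_dist_sub_le q q' p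
    rw [dist_comm q p, dist_comm q' p, hA] at this
    rw [abs_sub_comm]
    exact this
  have htν : t ≤ dist p q' := by
    have : A - dist p q' ≤ dist q q' := by
      have := le_abs_self (A - dist p q')
      rw [abs_sub_comm] at hlen
      linarith [hlen]
    linarith
  have step1 : dist (α t) (ν t) ≤ 2 * δ :=
    slim_common_start hGS hslim hα hν ht0 htν h2
  have step2 : dist (ν t) (β t) ≤ 2 * δ + dist p p' :=
    slim_common_end hGS hslim hδ hν hβ h1 htν h3
  calc dist (α t) (β t) ≤ dist (α t) (ν t) + dist (ν t) (β t) := dist_triangle _ _ _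
    _ ≤ 2 * δ + (2 * δ + dist p p') := add_le_add step1 step2
    _ = 4 * δ + dist p p' := by ring

end HypHelpers
section LogHelpers

variable {X : Type*} [MetricSpace X]

lemma min_lip (a b c : ℝ) : |min a c - min b c| ≤ |a - b| := by
  rcases le_total a c with h1 | h1 <;> rcases le_total b c with h2 | h2 <;>
    simp [min_eq_left, min_eq_right, h1, h2] <;> rw [abs_le] <;>
    constructor <;> cases abs_cases (a - b) <;> linarith

lemma clog_le_real {N : ℕ} {R : ℝ} (hNR : (N:ℝ) ≤ R) (hR : 1 ≤ R) :
    (Nat.clog 2 N : ℝ) ≤ Real.log R / Real.log 2 + 1 := by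
  have hlog2 : 0 < Real.log 2 := Real.log_pos one_lt_two
  have hlogR : 0 ≤ Real.log R := Real.log_nonneg hR
  set c := Nat.clog 2 N with hc
  rcases Nat.eq_zero_or_pos c with h0 | h0
  · rw [h0]; push_cast; positivity
  · have hN2 : ¬ (N ≤ 2 ^ (c - 1)) := by
      intro hcon
      have := (Nat.clog_le_iff_le_pow one_lt_two).mpr hcon
      omega
    push_neg at hN2
    have hpow : ((2:ℝ)) ^ (c - 1) < (N:ℝ) := by
      calc ((2:ℝ)) ^ (c-1) = ((2 ^ (c-1) : ℕ) : ℝ) := by push_cast; ring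
        _ < (N:ℝ) := by exact_mod_cast hN2
    have hlogN : ((c:ℝ) - 1) * Real.log 2 ≤ Real.log R := by
      have h2 : Real.log ((2:ℝ) ^ (c-1)) ≤ Real.log R :=
        Real.log_le_log (by positivity) (le_trans hpow.le hNR)
      rw [Real.log_pow] at h2
      have : ((c - 1 : ℕ) : ℝ) = (c:ℝ) - 1 := by
        have : 1 ≤ c := h0
        push_cast [Nat.cast_sub this]; ring
      rwa [this] at h2
    have hfin := (le_div_iff₀ hlog2).mpr hlogN
    linarith

end LogHelpers

section LogLemma

variable {X : Type*} [MetricSpace X]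

lemma log_lemma {δ θ : ℝ} (hGS : GeodesicSpace X) (hslim : SlimTriangles X δ)
    (hδ : 0 ≤ δ) (hθ : 0 ≤ θ) :
    ∀ N : ℕ, ∀ z : ℕ → X, (∀ i, i < N → dist (z i) (z (i+1)) ≤ θ) →
    ∀ A : ℝ, ∀ α : ℝ → X, IsGeodesicSegment α 0 A (z 0) (z N) →
    ∀ s ∈ Set.Icc (0:ℝ) A, ∃ i ≤ N, dist (α s) (z i) ≤ δ * (Nat.clog 2 N) + θ := by
  intro N
  induction N using Nat.strong_induction_on with
  | _ N IH =>
  intro z hmesh A α hα s hs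
  by_cases hN1 : N ≤ 1
  · have hA : dist (z 0) (z N) = A := seg_dist hα
    have hbound : A ≤ θ := by
      rcases Nat.le_one_iff_eq_zero_or_eq_one.mp hN1 with rfl | rfl
      · rw [← hA, dist_self]; exact hθ
      · rw [← hA]; exact hmesh 0 (by omega)
    refine ⟨0, by omega, ?_⟩
    have hd : dist (α s) (z 0) = s := by
      have h := seg_param hα hs ⟨le_refl _, hα.1⟩
      rw [hα.2.1] at h
      rw [h, sub_zero, abs_of_nonneg hs.1]
    rw [hd]
    have : (0:ℝ) ≤ δ * (Nat.clog 2 N) := by positivity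
    linarith [hs.2]
  · push_neg at hN1
    set h := (N + 1) / 2 with hhdef
    have hh1 : 1 ≤ h := by omega
    have hhN : h < N := by omega
    obtain ⟨β₁, hβ₁⟩ := hGS (z 0) (z h)
    obtain ⟨β₂, hβ₂⟩ := hGS (z h) (z N)
    have hαd : IsGeodesicSegment α 0 (dist (z 0) (z N)) (z 0) (z N) := by
      rw [seg_dist hα]; exact hα
    have hγ₂ : IsGeodesicSegment (fun t => β₂ (dist (z h) (z N) - t)) 0
        (dist (z N) (z h)) (z N) (z h) := by
      rw [dist_comm (z N) (z h)]; exact seg_reverse hβ₂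
    have hγ₃ : IsGeodesicSegment (fun t => β₁ (dist (z 0) (z h) - t)) 0
        (dist (z h) (z 0)) (z h) (z 0) := by
      rw [dist_comm (z h) (z 0)]; exact seg_reverse hβ₁
    have hsmem : s ∈ Set.Icc (0:ℝ) (dist (z 0) (z N)) := by
      rw [seg_dist hα]; exact hs
    obtain ⟨P, hP, hdP⟩ := hslim (z 0) (z N) (z h) α _ _ hαd hγ₂ hγ₃ s hsmem
    have hc1 : 1 ≤ Nat.clog 2 N := by
      by_contra hcon
      push_neg at hcon
      have : N ≤ 2 ^ 0 := (Nat.clog_le_iff_le_pow one_lt_two).mp (by omega)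
      simp at this; omega
    have hNc : N ≤ 2 ^ Nat.clog 2 N := (Nat.clog_le_iff_le_pow one_lt_two).mp le_rfl
    have hpow : 2 ^ Nat.clog 2 N = 2 * 2 ^ (Nat.clog 2 N - 1) := by
      conv_lhs => rw [show Nat.clog 2 N = (Nat.clog 2 N - 1) + 1 by omega]
      rw [pow_succ]; ring
    have hhc : Nat.clog 2 h ≤ Nat.clog 2 N - 1 :=
      (Nat.clog_le_iff_le_pow one_lt_two).mpr (by omega)
    have hNhc : Nat.clog 2 (N - h) ≤ Nat.clog 2 N - 1 :=
      (Nat.clog_le_iff_le_pow one_lt_two).mpr (by omega)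
    rcases hP with hP | hP
    · obtain ⟨v, hv, rfl⟩ := hP
      set w := dist (z h) (z N) - v with hwdef
      have hwmem : w ∈ Set.Icc (0:ℝ) (dist (z h) (z N)) := by
        rw [dist_comm (z N) (z h)] at hv
        exact ⟨by linarith [hv.2], by linarith [hv.1]⟩
      have hβ₂' : IsGeodesicSegment β₂ 0 (dist (z h) (z N))
          (z (h + 0)) (z (h + (N - h))) := by
        rw [show h + (N - h) = N by omega, show h + 0 = h from rfl]
        exact hβ₂
      obtain ⟨i, hiN, hdi⟩ := IH (N - h) (by omega) (fun i => z (h + i))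
        (fun i hi => by
          have := hmesh (h + i) (by omega)
          simpa [show h + (i + 1) = (h + i) + 1 from rfl] using this)
        (dist (z h) (z N)) β₂ hβ₂' w hwmem
      refine ⟨h + i, by omega, ?_⟩
      have hcast : (Nat.clog 2 (N - h) : ℝ) + 1 ≤ (Nat.clog 2 N : ℝ) := by
        exact_mod_cast (by omega : Nat.clog 2 (N - h) + 1 ≤ Nat.clog 2 N)
      calc dist (α s) (z (h + i))
          ≤ dist (α s) (β₂ w) + dist (β₂ w) (z (h + i)) := dist_triangle _ _ _
        _ ≤ δ + (δ * (Nat.clog 2 (N - h)) + θ) := add_le_add hdP hdi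
        _ ≤ δ * (Nat.clog 2 N) + θ := by nlinarith [hδ, hcast]
    · obtain ⟨v, hv, rfl⟩ := hP
      set w := dist (z 0) (z h) - v with hwdef
      have hwmem : w ∈ Set.Icc (0:ℝ) (dist (z 0) (z h)) := by
        rw [dist_comm (z h) (z 0)] at hv
        exact ⟨by linarith [hv.2], by linarith [hv.1]⟩
      obtain ⟨i, hiN, hdi⟩ := IH h (by omega) z
        (fun i hi => hmesh i (by omega))
        (dist (z 0) (z h)) β₁ hβ₁ w hwmem
      refine ⟨i, by omega, ?_⟩
      have hcast : (Nat.clog 2 h : ℝ) + 1 ≤ (Nat.clog 2 N : ℝ) := by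
        exact_mod_cast (by omega : Nat.clog 2 h + 1 ≤ Nat.clog 2 N)
      calc dist (α s) (z i)
          ≤ dist (α s) (β₁ w) + dist (β₁ w) (z i) := dist_triangle _ _ _
        _ ≤ δ + (δ * (Nat.clog 2 h) + θ) := add_le_add hdP hdi
        _ ≤ δ * (Nat.clog 2 N) + θ := by nlinarith [hδ, hcast]

end LogLemma
section ChainHelpers

variable {X : Type*} [MetricSpace X]

lemma chain_append {θ : ℝ} {z₁ z₂ : ℕ → X} {N₁ N₂ : ℕ}
    (h₁ : ∀ i, i < N₁ → dist (z₁ i) (z₁ (i+1)) ≤ θ)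
    (h₂ : ∀ i, i < N₂ → dist (z₂ i) (z₂ (i+1)) ≤ θ)
    (hj : z₁ N₁ = z₂ 0) :
    ∃ z : ℕ → X, (∀ i, i < N₁ + N₂ → dist (z i) (z (i+1)) ≤ θ) ∧ z 0 = z₁ 0 ∧
      z (N₁ + N₂) = z₂ N₂ ∧
      ∀ i, i ≤ N₁ + N₂ → (∃ j, j ≤ N₁ ∧ z i = z₁ j) ∨ (∃ j, j ≤ N₂ ∧ z i = z₂ j) := by
  refine ⟨fun i => if i ≤ N₁ then z₁ i else z₂ (i - N₁), ?_, ?_, ?_, ?_⟩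
  · intro i hi
    by_cases hi1 : i + 1 ≤ N₁
    · simp only [if_pos (by omega : i ≤ N₁), if_pos hi1]
      exact h₁ i (by omega)
    · by_cases hi0 : i ≤ N₁
      · have hieq : i = N₁ := by omega
        subst hieq
        simp only [if_pos hi0, if_neg hi1]
        rw [hj, show i + 1 - i = 1 by omega]
        exact h₂ 0 (by omega)
      · simp only [if_neg hi0, if_neg hi1]
        rw [show i + 1 - N₁ = (i - N₁) + 1 by omega]
        exact h₂ (i - N₁) (by omega)
  · simp
  · by_cases hN : N₁ + N₂ ≤ N₁
    · have hN2 : N₂ = 0 := by omega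
      subst hN2
      simp only [if_pos hN]
      simpa using hj
    · simp only [if_neg hN]
      rw [show N₁ + N₂ - N₁ = N₂ by omega]
  · intro i hi
    by_cases hcase : i ≤ N₁
    · exact Or.inl ⟨i, hcase, by simp [hcase]⟩
    · exact Or.inr ⟨i - N₁, by omega, by simp [hcase]⟩

lemma unit_chain {β : ℝ → X} {E : ℝ} {v w : X} (hβ : IsGeodesicSegment β 0 E v w) :
    ∃ z : ℕ → X, (∀ i, i < ⌈E⌉₊ → dist (z i) (z (i+1)) ≤ 1) ∧ z 0 = v ∧ z ⌈E⌉₊ = w ∧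
      ∀ i, ∃ u ∈ Set.Icc (0:ℝ) E, z i = β u := by
  have hE : 0 ≤ E := hβ.1
  have hmem : ∀ i : ℕ, min (i:ℝ) E ∈ Set.Icc (0:ℝ) E :=
    fun i => ⟨le_min (by positivity) hE, min_le_right _ _⟩
  refine ⟨fun i => β (min (i:ℝ) E), ?_, ?_, ?_, fun i => ⟨_, hmem i, rfl⟩⟩
  · intro i _
    rw [seg_param hβ (hmem i) (hmem (i+1))]
    calc |min (i:ℝ) E - min (((i+1 : ℕ)):ℝ) E| ≤ |(i:ℝ) - ((i+1 : ℕ):ℝ)| := min_lip _ _ _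
      _ = 1 := by push_cast; rw [show (i:ℝ) - ((i:ℝ) + 1) = -1 by ring, abs_neg, abs_one]
  · show β (min ((0:ℕ):ℝ) E) = v
    rw [Nat.cast_zero, min_eq_left hE]
    exact hβ.2.1
  · show β (min ((⌈E⌉₊:ℕ):ℝ) E) = w
    rw [min_eq_right (Nat.le_ceil E)]
    exact hβ.2.2.1

lemma orbit_walk {κ : ℝ} (y : ℕ → X) (hstep : ∀ j, dist (y j) (y (j+1)) ≤ κ) (j₁ j₂ : ℕ) :
    ∃ (w : ℕ → X) (M : ℕ), ((M:ℝ) = |(j₁:ℝ) - (j₂:ℝ)|) ∧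
      (∀ i, i < M → dist (w i) (w (i+1)) ≤ κ) ∧ w 0 = y j₁ ∧ w M = y j₂ ∧
      ∀ i, ∃ j, min j₁ j₂ ≤ j ∧ j ≤ max j₁ j₂ ∧ w i = y j := by
  rcases le_total j₁ j₂ with hle | hle
  · refine ⟨fun i => y (min (j₁ + i) j₂), j₂ - j₁, ?_, ?_, ?_, ?_, ?_⟩
    · rw [Nat.cast_sub hle, abs_sub_comm, abs_of_nonneg (by
        simp only [sub_nonneg]; exact_mod_cast hle)]
    · intro i hi
      have e1 : min (j₁ + i) j₂ = j₁ + i := by omega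
      have e2 : min (j₁ + (i+1)) j₂ = (j₁ + i) + 1 := by omega
      show dist (y (min (j₁ + i) j₂)) (y (min (j₁ + (i+1)) j₂)) ≤ κ
      rw [e1, e2]
      exact hstep (j₁ + i)
    · show y (min (j₁ + 0) j₂) = y j₁
      have e : min (j₁ + 0) j₂ = j₁ := by omega
      rw [e]
    · show y (min (j₁ + (j₂ - j₁)) j₂) = y j₂
      have e : min (j₁ + (j₂ - j₁)) j₂ = j₂ := by omega
      rw [e]
    · intro i
      exact ⟨min (j₁ + i) j₂, by omega, by omega, rfl⟩
  · refine ⟨fun i => y (j₁ - min i (j₁ - j₂)), j₁ - j₂, ?_, ?_, ?_, ?_, ?_⟩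
    · rw [Nat.cast_sub hle, abs_of_nonneg (by
        simp only [sub_nonneg]; exact_mod_cast hle)]
    · intro i hi
      have e1 : j₁ - min i (j₁ - j₂) = (j₁ - i - 1) + 1 := by omega
      have e2 : j₁ - min (i+1) (j₁ - j₂) = j₁ - i - 1 := by omega
      show dist (y (j₁ - min i (j₁ - j₂))) (y (j₁ - min (i+1) (j₁ - j₂))) ≤ κ
      rw [e1, e2, dist_comm]
      exact hstep (j₁ - i - 1)
    · show y (j₁ - min 0 (j₁ - j₂)) = y j₁
      have e : j₁ - min 0 (j₁ - j₂) = j₁ := by omega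
      rw [e]
    · show y (j₁ - min (j₁ - j₂) (j₁ - j₂)) = y j₂
      have e : j₁ - min (j₁ - j₂) (j₁ - j₂) = j₂ := by omega
      rw [e]
    · intro i
      exact ⟨j₁ - min i (j₁ - j₂), by omega, by omega, rfl⟩

end ChainHelpers
section MorseHelpers

variable {X : Type*} [MetricSpace X]


lemma solve_log {δ θ c₁ c₂ D B' G' : ℝ} (hδ : 0 ≤ δ) (hθ0 : 0 ≤ θ) (hθ1 : 1 ≤ θ)
    (hc₁1 : 1 ≤ c₁) (hc₂1 : 1 ≤ c₂) (hD0 : 0 ≤ D)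
    (hB'def : B' = 2 * δ * (c₁ + c₂) / Real.log 2) (hG'def : G' = 2 * δ + 2 * θ + 1)
    (h2 : D / 2 ≤ δ * (Real.log (c₁ * D + c₂) / Real.log 2 + 1) + θ) :
    D ≤ 2 * B' * (2 * B' + G') + G' := by
  have hlog2 : (0:ℝ) < Real.log 2 := Real.log_pos one_lt_two
  have hB'0 : 0 ≤ B' := by rw [hB'def]; positivity
  have hG'1 : (1:ℝ) ≤ G' := by rw [hG'def]; linarith
  have hR0 : (0:ℝ) < c₁ * D + c₂ := by nlinarith
  have hlogR : Real.log (c₁ * D + c₂) ≤ 2 * Real.sqrt (c₁ * D + c₂) := by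
    have h1 : Real.log (Real.sqrt (c₁ * D + c₂)) ≤ Real.sqrt (c₁ * D + c₂) - 1 :=
      Real.log_le_sub_one_of_pos (Real.sqrt_pos.2 hR0)
    rw [Real.log_sqrt hR0.le] at h1
    linarith
  set S := Real.sqrt (max D 1) with hSdef
  have hS1 : 1 ≤ S := by
    have hh : Real.sqrt 1 ≤ S := Real.sqrt_le_sqrt (le_max_right D 1)
    rwa [Real.sqrt_one] at hh
  have hSsq : S ^ 2 = max D 1 := Real.sq_sqrt (by positivity)
  have hsqcc : Real.sqrt (c₁ + c₂) ≤ c₁ + c₂ := by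
    have e1 : Real.sqrt (c₁+c₂) ^ 2 = c₁ + c₂ := Real.sq_sqrt (by linarith)
    nlinarith [Real.sqrt_nonneg (c₁+c₂), sq_nonneg (Real.sqrt (c₁+c₂) - 1)]
  have hsqR : Real.sqrt (c₁ * D + c₂) ≤ (c₁ + c₂) * S := by
    have h1 : c₁ * D + c₂ ≤ (c₁ + c₂) * max D 1 := by
      rcases le_total D 1 with hc | hc
      · rw [max_eq_right hc]; nlinarith
      · rw [max_eq_left hc]; nlinarith
    calc Real.sqrt (c₁ * D + c₂) ≤ Real.sqrt ((c₁ + c₂) * max D 1) :=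
          Real.sqrt_le_sqrt h1
      _ = Real.sqrt (c₁ + c₂) * S := by rw [Real.sqrt_mul (by linarith) _]
      _ ≤ (c₁ + c₂) * S := mul_le_mul_of_nonneg_right hsqcc (by linarith)
  have hDS : D ≤ 2 * B' * S + (2 * δ + 2 * θ) := by
    have h3 : δ * (Real.log (c₁*D+c₂) / Real.log 2) ≤ B' * S := by
      have hlog' : Real.log (c₁*D+c₂) ≤ 2 * ((c₁ + c₂) * S) := by linarith
      have h4 : Real.log (c₁*D+c₂) / Real.log 2 ≤ (2 * ((c₁+c₂) * S)) / Real.log 2 :=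
        (div_le_div_iff_of_pos_right hlog2).mpr hlog'
      calc δ * (Real.log (c₁*D+c₂) / Real.log 2)
          ≤ δ * ((2 * ((c₁+c₂) * S)) / Real.log 2) := mul_le_mul_of_nonneg_left h4 hδ
        _ = 2 * δ * (c₁ + c₂) / Real.log 2 * S := by ring
        _ = B' * S := by rw [hB'def]
    have hexp : δ * (Real.log (c₁*D+c₂) / Real.log 2 + 1)
        = δ * (Real.log (c₁*D+c₂) / Real.log 2) + δ := by ring
    linarith
  have hSb : S ≤ 2 * B' + G' := by
    by_contra hcon
    push_neg at hcon
    have h1 : S ^ 2 ≤ D + 1 := by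
      rw [hSsq]
      rcases le_total D 1 with hc | hc
      · rw [max_eq_right hc]; linarith
      · rw [max_eq_left hc]; linarith
    have hG'sub : 2 * δ + 2 * θ = G' - 1 := by rw [hG'def]; ring
    nlinarith [hDS, hS1, hB'0, hG'1]
  calc D ≤ 2 * B' * S + (2 * δ + 2 * θ) := hDS
    _ ≤ 2 * B' * (2 * B' + G') + G' := by
        have hG'sub : 2 * δ + 2 * θ = G' - 1 := by rw [hG'def]; ring
        nlinarith [hB'0]

set_option maxHeartbeats 1000000 in
lemma morse_half1 {δ a b₁ κ : ℝ} (hGS : GeodesicSpace X) (hslim : SlimTriangles X δ)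
    (hδ : 0 ≤ δ) (ha : 0 < a) (hb : 0 ≤ b₁) (hκ : 0 ≤ κ)
    (y : ℕ → X) (hstep : ∀ j, dist (y j) (y (j+1)) ≤ κ)
    (hQI : ∀ i j : ℕ, a⁻¹ * |(i:ℝ) - (j:ℝ)| - b₁ ≤ dist (y i) (y j)) :
    ∃ Λ : ℝ, 0 ≤ Λ ∧ ∀ (m : ℕ) (A : ℝ) (ρ : ℝ → X),
      IsGeodesicSegment ρ 0 A (y 0) (y m) →
      ∀ s ∈ Set.Icc (0:ℝ) A, ∃ j, j ≤ m ∧ dist (ρ s) (y j) ≤ Λ := by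
  set θ : ℝ := max 1 κ with hθdef
  have hθ1 : (1:ℝ) ≤ θ := le_max_left _ _
  have hθκ : κ ≤ θ := le_max_right _ _
  have hθ0 : (0:ℝ) ≤ θ := by linarith
  set c₁ : ℝ := 6 * a + 2 with hc₁def
  set c₂ : ℝ := a * b₁ + 2 with hc₂def
  have hc₁1 : (1:ℝ) ≤ c₁ := by nlinarith
  have hc₂1 : (1:ℝ) ≤ c₂ := by nlinarith
  have hlog2 : (0:ℝ) < Real.log 2 := Real.log_pos one_lt_two
  set B' : ℝ := 2 * δ * (c₁ + c₂) / Real.log 2 with hB'def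
  have hB'0 : 0 ≤ B' := by positivity
  set G' : ℝ := 2 * δ + 2 * θ + 1 with hG'def
  have hG'1 : (1:ℝ) ≤ G' := by linarith
  refine ⟨2 * B' * (2 * B' + G') + G', by nlinarith, ?_⟩
  intro m A ρ hρ
  have hA0 : (0:ℝ) ≤ A := hρ.1
  have hne : (Finset.range (m+1)).Nonempty := Finset.nonempty_range_add_one
  set φ : ℝ → ℝ := fun s => (Finset.range (m+1)).inf' hne (fun j => dist (ρ s) (y j))
    with hφdef
  have hφ_le : ∀ s : ℝ, ∀ j, j ≤ m → φ s ≤ dist (ρ s) (y j) := fun s j hj =>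
    Finset.inf'_le _ (Finset.mem_range.mpr (by omega))
  have hφ_ex : ∀ s : ℝ, ∃ j, j ≤ m ∧ φ s = dist (ρ s) (y j) := by
    intro s
    obtain ⟨j, hj, hval⟩ := Finset.exists_mem_eq_inf' hne (fun j => dist (ρ s) (y j))
    exact ⟨j, Nat.lt_succ_iff.mp (Finset.mem_range.mp hj), hval⟩
  have hφ0 : ∀ s, 0 ≤ φ s := by
    intro s
    obtain ⟨j, _, hval⟩ := hφ_ex s
    rw [hval]; exact dist_nonneg
  have hφ_lip : ∀ s ∈ Set.Icc (0:ℝ) A, ∀ t ∈ Set.Icc (0:ℝ) A, φ s ≤ φ t + |s - t| := by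
    intro s hsm t htm
    obtain ⟨j, hj, hval⟩ := hφ_ex t
    calc φ s ≤ dist (ρ s) (y j) := hφ_le s j hj
      _ ≤ dist (ρ s) (ρ t) + dist (ρ t) (y j) := dist_triangle _ _ _
      _ = φ t + |s - t| := by rw [seg_param hρ hsm htm, ← hval]; ring
  have hφcont : ContinuousOn φ (Set.Icc 0 A) := by
    intro s hsm
    apply Metric.continuousWithinAt_iff.2
    intro ε hε
    refine ⟨ε, hε, fun t htm hts => ?_⟩
    rw [Real.dist_eq] at hts ⊢
    have l1 := hφ_lip t htm s hsm
    have l2 := hφ_lip s hsm t htm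
    rw [abs_sub_comm s t] at l2
    rw [abs_lt]
    constructor <;> [skip; skip] <;> cases abs_cases (t - s) <;> linarith
  obtain ⟨s₀, hs₀, hmaxon⟩ := isCompact_Icc.exists_isMaxOn
    ⟨0, Set.left_mem_Icc.2 hA0⟩ hφcont
  have hmax : ∀ s ∈ Set.Icc (0:ℝ) A, φ s ≤ φ s₀ := fun s hs => hmaxon hs
  set D := φ s₀ with hDdef
  have hD0 : 0 ≤ D := hφ0 s₀
  suffices hDΛ : D ≤ 2 * B' * (2 * B' + G') + G' by
    intro s hsmem
    obtain ⟨j, hj, hval⟩ := hφ_ex s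
    exact ⟨j, hj, by rw [← hval]; exact le_trans (hmax s hsmem) hDΛ⟩
  -- window
  set sp := max 0 (s₀ - 2*D) with hspdef
  set sq := min A (s₀ + 2*D) with hsqdef
  have hsps₀ : sp ≤ s₀ := max_le hs₀.1 (by linarith)
  have hs₀sq : s₀ ≤ sq := le_min hs₀.2 (by linarith)
  have hspmem : sp ∈ Set.Icc (0:ℝ) A := ⟨le_max_left _ _, le_trans hsps₀ hs₀.2⟩
  have hsqmem : sq ∈ Set.Icc (0:ℝ) A := ⟨le_trans hs₀.1 hs₀sq, min_le_left _ _⟩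
  have hdp : dist (ρ s₀) (ρ sp) = s₀ - sp := by
    rw [seg_param hρ hs₀ hspmem, abs_of_nonneg (by linarith)]
  have hdq : dist (ρ s₀) (ρ sq) = sq - s₀ := by
    rw [seg_param hρ hs₀ hsqmem, abs_of_nonpos (by linarith)]; ring
  have hDp : D ≤ dist (ρ s₀) (ρ sp) := by
    rcases le_total 0 (s₀ - 2*D) with hc | hc
    · rw [hdp, hspdef, max_eq_right hc]; linarith
    · have : sp = 0 := by rw [hspdef, max_eq_left hc]
      rw [this, hρ.2.1]
      exact hφ_le s₀ 0 (by omega)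
  have hDq : D ≤ dist (ρ s₀) (ρ sq) := by
    rcases le_total (s₀ + 2*D) A with hc | hc
    · rw [hdq, hsqdef, min_eq_right hc]; linarith
    · have : sq = A := by rw [hsqdef, min_eq_left hc]
      rw [this, hρ.2.2.1]
      exact hφ_le s₀ m (by omega)
  -- connector endpoints
  obtain ⟨j₁, hj₁m, hE₁⟩ := hφ_ex sp
  obtain ⟨j₂, hj₂m, hE₂⟩ := hφ_ex sq
  have hE₁D : dist (ρ sp) (y j₁) ≤ D := by rw [← hE₁]; exact hmax sp hspmem
  have hE₂D : dist (ρ sq) (y j₂) ≤ D := by rw [← hE₂]; exact hmax sq hsqmem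
  -- chains
  obtain ⟨β₁, hβ₁⟩ := hGS (ρ sp) (y j₁)
  obtain ⟨β₂, hβ₂⟩ := hGS (y j₂) (ρ sq)
  obtain ⟨z₁, hz₁mesh, hz₁0, hz₁end, hz₁mem⟩ := unit_chain hβ₁
  obtain ⟨z₃, hz₃mesh, hz₃0, hz₃end, hz₃mem⟩ := unit_chain hβ₂
  obtain ⟨w, M, hMval, hwmesh, hw0, hwend, hwmem⟩ := orbit_walk y hstep j₁ j₂
  set N₁ := ⌈dist (ρ sp) (y j₁)⌉₊ with hN₁def
  set N₃ := ⌈dist (y j₂) (ρ sq)⌉₊ with hN₃def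
  obtain ⟨z23, hmesh23, h23_0, h23_end, hmem23⟩ :=
    chain_append (θ := θ) (fun i hi => le_trans (hwmesh i hi) hθκ)
      (fun i hi => le_trans (hz₃mesh i hi) hθ1) (by rw [hwend, hz₃0])
  obtain ⟨z, hmeshz, hz0, hzend, hmemz⟩ :=
    chain_append (θ := θ) (fun i hi => le_trans (hz₁mesh i hi) hθ1) hmesh23
      (by rw [hz₁end, h23_0, hw0])
  set N := N₁ + (M + N₃) with hNdef
  -- the geodesic subsegment from ρ sp to ρ sq
  have hzp : z 0 = ρ sp := by rw [hz0, hz₁0]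
  have hzq : z N = ρ sq := by rw [hzend, h23_end, hz₃end]
  have hα : IsGeodesicSegment (fun t => ρ (t + sp)) 0 (sq - sp) (z 0) (z N) := by
    rw [hzp, hzq]
    refine ⟨by linarith, by simp, by simp, fun u hu v hv => ?_⟩
    rw [hρ.2.2.2 (u + sp) ⟨by linarith [hu.1, hspmem.1], by linarith [hu.2, hsqmem.2]⟩
      (v + sp) ⟨by linarith [hv.1, hspmem.1], by linarith [hv.2, hsqmem.2]⟩]
    congr 1; ring
  obtain ⟨i, hiN, hdi⟩ := log_lemma hGS hslim hδ hθ0 N z hmeshz (sq - sp) _ hα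
    (s₀ - sp) ⟨by linarith, by linarith⟩
  rw [show s₀ - sp + sp = s₀ by ring] at hdi
  -- lower bound D/2 for all chain points
  have hlow : D / 2 ≤ dist (ρ s₀) (z i) := by
    have hDs₀1 : D ≤ dist (ρ s₀) (y j₁) := hφ_le s₀ j₁ hj₁m
    have hDs₀2 : D ≤ dist (ρ s₀) (y j₂) := hφ_le s₀ j₂ hj₂m
    rcases hmemz i hiN with ⟨j, hjN₁, hji⟩ | ⟨j, hjrest, hji⟩
    · -- on the first connector
      obtain ⟨u, humem, hzu⟩ := hz₁mem j
      rw [hji, hzu]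
      have h1 : dist (β₁ u) (ρ sp) = u := by
        have hh := seg_param hβ₁ ⟨le_refl _, hβ₁.1⟩ humem
        rw [hβ₁.2.1] at hh
        rw [dist_comm, hh, zero_sub, abs_neg, abs_of_nonneg humem.1]
      have h2 : dist (β₁ u) (y j₁) = dist (ρ sp) (y j₁) - u := by
        have hh := seg_param hβ₁ humem ⟨hβ₁.1, le_refl _⟩
        rw [hβ₁.2.2.1] at hh
        rw [hh, abs_of_nonpos (by linarith [humem.2])]; ring
      have t1 : dist (ρ s₀) (ρ sp) ≤ dist (ρ s₀) (β₁ u) + u := by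
        calc dist (ρ s₀) (ρ sp) ≤ dist (ρ s₀) (β₁ u) + dist (β₁ u) (ρ sp) :=
          dist_triangle _ _ _
          _ = dist (ρ s₀) (β₁ u) + u := by rw [h1]
      have t2 : dist (ρ s₀) (y j₁) ≤ dist (ρ s₀) (β₁ u) + (dist (ρ sp) (y j₁) - u) := by
        calc dist (ρ s₀) (y j₁) ≤ dist (ρ s₀) (β₁ u) + dist (β₁ u) (y j₁) :=
          dist_triangle _ _ _
          _ = _ := by rw [h2]
      linarith [hDp, hE₁D]
    · rcases hmem23 j hjrest with ⟨j', hj'M, hjj'⟩ | ⟨j', hj'N₃, hjj'⟩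
      · -- orbit point
        obtain ⟨jy, _, hjym, hwjy⟩ := hwmem j'
        rw [hji, hjj', hwjy]
        have : jy ≤ m := le_trans hjym (by omega)
        linarith [hφ_le s₀ jy this]
      · -- on the second connector
        obtain ⟨u, humem, hzu⟩ := hz₃mem j'
        rw [hji, hjj', hzu]
        have h1 : dist (β₂ u) (y j₂) = u := by
          have hh := seg_param hβ₂ ⟨le_refl _, hβ₂.1⟩ humem
          rw [hβ₂.2.1] at hh
          rw [dist_comm, hh, zero_sub, abs_neg, abs_of_nonneg humem.1]
        have h2 : dist (β₂ u) (ρ sq) = dist (y j₂) (ρ sq) - u := by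
          have hh := seg_param hβ₂ humem ⟨hβ₂.1, le_refl _⟩
          rw [hβ₂.2.2.1] at hh
          rw [hh, abs_of_nonpos (by linarith [humem.2])]; ring
        have t1 : dist (ρ s₀) (ρ sq) ≤ dist (ρ s₀) (β₂ u) + (dist (y j₂) (ρ sq) - u) := by
          calc dist (ρ s₀) (ρ sq) ≤ dist (ρ s₀) (β₂ u) + dist (β₂ u) (ρ sq) :=
            dist_triangle _ _ _
            _ = _ := by rw [h2]
        have t2 : dist (ρ s₀) (y j₂) ≤ dist (ρ s₀) (β₂ u) + u := by
          calc dist (ρ s₀) (y j₂) ≤ dist (ρ s₀) (β₂ u) + dist (β₂ u) (y j₂) :=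
            dist_triangle _ _ _
            _ = _ := by rw [h1]
        have hE₂D' : dist (y j₂) (ρ sq) ≤ D := by rw [dist_comm]; exact hE₂D
        linarith [hDq]
  -- counting the chain
  have hcount : (N:ℝ) ≤ c₁ * D + c₂ := by
    have hN₁b : (N₁:ℝ) ≤ D + 1 := by
      have := Nat.ceil_lt_add_one (dist_nonneg : (0:ℝ) ≤ dist (ρ sp) (y j₁))
      linarith [hE₁D]
    have hN₃b : (N₃:ℝ) ≤ D + 1 := by
      have := Nat.ceil_lt_add_one (dist_nonneg : (0:ℝ) ≤ dist (y j₂) (ρ sq))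
      have h' : dist (y j₂) (ρ sq) ≤ D := by rw [dist_comm]; exact hE₂D
      linarith
    have hMb : (M:ℝ) ≤ a * (6 * D + b₁) := by
      have hq := hQI j₁ j₂
      rw [← hMval] at hq
      have hd12 : dist (y j₁) (y j₂) ≤ 6 * D := by
        have hmid : dist (ρ sp) (ρ sq) = sq - sp := by
          rw [seg_param hρ hspmem hsqmem, abs_of_nonpos (by linarith)]; ring
        have hwin : sq - sp ≤ 4 * D := by
          have e1 : s₀ - 2*D ≤ sp := le_max_right _ _
          have e2 : sq ≤ s₀ + 2*D := min_le_right _ _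
          linarith
        calc dist (y j₁) (y j₂)
            ≤ dist (y j₁) (ρ sp) + dist (ρ sp) (ρ sq) + dist (ρ sq) (y j₂) :=
              dist_triangle4 _ _ _ _
          _ ≤ D + 4 * D + D := by
              refine add_le_add (add_le_add ?_ (by linarith [hmid, hwin])) hE₂D
              rw [dist_comm]; exact hE₁D
          _ = 6 * D := by ring
      have h1 : a⁻¹ * (M:ℝ) ≤ dist (y j₁) (y j₂) + b₁ := by linarith
      calc (M:ℝ) = a * (a⁻¹ * (M:ℝ)) := by field_simp
        _ ≤ a * (dist (y j₁) (y j₂) + b₁) := by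
            apply mul_le_mul_of_nonneg_left h1 ha.le
        _ ≤ a * (6 * D + b₁) := by nlinarith [hd12]
    have : (N:ℝ) = (N₁:ℝ) + ((M:ℝ) + (N₃:ℝ)) := by rw [hNdef]; push_cast; ring
    rw [this, hc₁def, hc₂def]
    nlinarith [hN₁b, hN₃b, hMb]
  -- the key inequality
  have hkey : D / 2 ≤ δ * ((Nat.clog 2 N : ℝ)) + θ := le_trans hlow hdi
  have hclog : (Nat.clog 2 N : ℝ) ≤ Real.log (c₁ * D + c₂) / Real.log 2 + 1 :=
    clog_le_real hcount (by nlinarith)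
  -- solve the log inequality
  have h2 : D / 2 ≤ δ * (Real.log (c₁*D + c₂) / Real.log 2 + 1) + θ := by
    calc D / 2 ≤ δ * ((Nat.clog 2 N : ℝ)) + θ := hkey
      _ ≤ δ * (Real.log (c₁*D + c₂) / Real.log 2 + 1) + θ :=
          add_le_add_left (mul_le_mul_of_nonneg_left hclog hδ) θ
  exact solve_log hδ hθ0 hθ1 hc₁1 hc₂1 hD0 hB'def hG'def h2

end MorseHelpers
section Morse2

variable {X : Type*} [MetricSpace X]

lemma chain_dist {κ : ℝ} {y : ℕ → X} (hstep : ∀ j, dist (y j) (y (j+1)) ≤ κ) :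
    ∀ i k : ℕ, dist (y i) (y (i + k)) ≤ κ * k := by
  intro i k
  induction k with
  | zero => simp
  | succ k ih =>
      calc dist (y i) (y (i + (k+1)))
          ≤ dist (y i) (y (i + k)) + dist (y (i+k)) (y (i+k+1)) := dist_triangle _ _ _
        _ ≤ κ * k + κ := add_le_add ih (hstep (i+k))
        _ = κ * ((k:ℝ)+1) := by ring
        _ = κ * ((k+1 : ℕ):ℝ) := by push_cast; ring

lemma morse_half2 {δ a b₁ κ Λ : ℝ} (ha : 0 < a) (hΛ : 0 ≤ Λ)
    (y : ℕ → X) (hstep : ∀ j, dist (y j) (y (j+1)) ≤ κ)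
    (hQI : ∀ i j : ℕ, a⁻¹ * |(i:ℝ) - (j:ℝ)| - b₁ ≤ dist (y i) (y j))
    (m : ℕ) (A : ℝ) (ρ : ℝ → X) (hρ : IsGeodesicSegment ρ 0 A (y 0) (y m))
    (hhalf1 : ∀ s ∈ Set.Icc (0:ℝ) A, ∃ j, j ≤ m ∧ dist (ρ s) (y j) ≤ Λ)
    (n : ℕ) (hn : n ≤ m) :
    ∃ u ∈ Set.Icc (0:ℝ) A, dist (y n) (ρ u) ≤ Λ + κ * (a * (2*Λ + b₁)) := by
  have hκ : 0 ≤ κ := le_trans dist_nonneg (hstep 0)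
  have hA0 : 0 ≤ A := hρ.1
  rcases eq_or_lt_of_le hn with rfl | hnm
  · refine ⟨A, Set.right_mem_Icc.2 hA0, ?_⟩
    rw [hρ.2.2.1, dist_self]
    have hb : 0 ≤ b₁ := by
      have hq := hQI 0 0
      rw [sub_self, abs_zero, mul_zero, dist_self] at hq
      linarith
    have h2 : 0 ≤ κ * (a * (2*Λ + b₁)) :=
      mul_nonneg hκ (mul_nonneg ha.le (by linarith))
    linarith
  · set T := {s : ℝ | s ∈ Set.Icc (0:ℝ) A ∧ ∃ i, i ≤ n ∧ dist (ρ s) (y i) ≤ Λ} with hT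
    have h0T : (0:ℝ) ∈ T := by
      refine ⟨Set.left_mem_Icc.2 hA0, 0, by omega, ?_⟩
      rw [hρ.2.1, dist_self]; exact hΛ
    have hTne : T.Nonempty := ⟨0, h0T⟩
    have hTbdd : BddAbove T := ⟨A, fun s hs => hs.1.2⟩
    set s₁ := sSup T with hs₁def
    have hs₁mem : s₁ ∈ Set.Icc (0:ℝ) A :=
      ⟨le_csSup hTbdd h0T, csSup_le hTne (fun s hs => hs.1.2)⟩
    -- s₁ is itself (almost) in T
    have hC1 : ∃ i, i ≤ n ∧ dist (ρ s₁) (y i) ≤ Λ := by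
      by_contra hcon
      push_neg at hcon
      have hne : (Finset.range (n+1)).Nonempty := Finset.nonempty_range_add_one
      set g := (Finset.range (n+1)).inf' hne (fun i => dist (ρ s₁) (y i) - Λ) with hg
      have hg0 : 0 < g := by
        rw [hg]
        rw [Finset.lt_inf'_iff]
        intro i hi
        have := hcon i (Nat.lt_succ_iff.mp (Finset.mem_range.mp hi))
        linarith
      obtain ⟨s, hsT, hss⟩ := exists_lt_of_lt_csSup hTne (by linarith : s₁ - g < s₁)
      have hsle : s ≤ s₁ := le_csSup hTbdd hsT
      obtain ⟨hsmem, i, hin, hdi⟩ := hsT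
      have hgi : g ≤ dist (ρ s₁) (y i) - Λ := by
        rw [hg]
        exact Finset.inf'_le _ (Finset.mem_range.mpr (by omega))
      have hlips : dist (ρ s₁) (y i) ≤ dist (ρ s) (y i) + (s₁ - s) := by
        calc dist (ρ s₁) (y i) ≤ dist (ρ s₁) (ρ s) + dist (ρ s) (y i) := dist_triangle _ _ _
          _ = (s₁ - s) + dist (ρ s) (y i) := by
              rw [seg_param hρ hs₁mem hsmem, abs_of_nonneg (by linarith)]
          _ = _ := by ring
      linarith
    obtain ⟨i, hin, hdi⟩ := hC1
    -- some later index is also close to ρ s₁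
    have hC2 : ∃ i', n ≤ i' ∧ i' ≤ m ∧ dist (ρ s₁) (y i') ≤ Λ := by
      rcases eq_or_lt_of_le hs₁mem.2 with heq | hlt
      · refine ⟨m, by omega, le_refl m, ?_⟩
        rw [heq, hρ.2.2.1, dist_self]; exact hΛ
      · by_contra hcon
        push_neg at hcon
        have hne : (Finset.Ioc n m).Nonempty := ⟨m, Finset.mem_Ioc.mpr ⟨hnm, le_refl m⟩⟩
        set g := (Finset.Ioc n m).inf' hne (fun i' => dist (ρ s₁) (y i') - Λ) with hg
        have hg0 : 0 < g := by
          rw [hg]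
          rw [Finset.lt_inf'_iff]
          intro i' hi'
          obtain ⟨h1, h2⟩ := Finset.mem_Ioc.mp hi'
          have := hcon i' h1.le h2
          linarith
        set s := min A (s₁ + g/2) with hs
        have hss₁ : s₁ < s := by
          rw [hs]; exact lt_min hlt (by linarith)
        have hsmem : s ∈ Set.Icc (0:ℝ) A :=
          ⟨le_trans hs₁mem.1 hss₁.le, min_le_left _ _⟩
        obtain ⟨j, hjm, hdj⟩ := hhalf1 s hsmem
        have hjn : n < j := by
          by_contra hjn
          push_neg at hjn
          have : s ∈ T := ⟨hsmem, j, hjn, hdj⟩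
          have := le_csSup hTbdd this
          linarith
        have hgap : g ≤ dist (ρ s₁) (y j) - Λ := by
          rw [hg]
          exact Finset.inf'_le _ (Finset.mem_Ioc.mpr ⟨hjn, hjm⟩)
        have hlips : dist (ρ s₁) (y j) ≤ dist (ρ s) (y j) + (s - s₁) := by
          calc dist (ρ s₁) (y j) ≤ dist (ρ s₁) (ρ s) + dist (ρ s) (y j) := dist_triangle _ _ _
            _ = (s - s₁) + dist (ρ s) (y j) := by
                rw [seg_param hρ hs₁mem hsmem, abs_of_nonpos (by linarith)]; ring
            _ = _ := by ring
        have hsb : s - s₁ ≤ g / 2 := by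
          rw [hs]
          have := min_le_right A (s₁ + g/2)
          linarith
        linarith
    obtain ⟨i', hni', hi'm, hdi'⟩ := hC2
    -- index gap bound
    have hdist : dist (y i) (y i') ≤ 2 * Λ := by
      calc dist (y i) (y i') ≤ dist (y i) (ρ s₁) + dist (ρ s₁) (y i') := dist_triangle _ _ _
        _ ≤ Λ + Λ := add_le_add (by rw [dist_comm]; exact hdi) hdi'
        _ = 2 * Λ := by ring
    have hgap : ((i':ℝ) - i) ≤ a * (2*Λ + b₁) := by
      have hq := hQI i i'
      have habs : |(i:ℝ) - (i':ℝ)| = (i':ℝ) - i := by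
        rw [abs_sub_comm, abs_of_nonneg (by
          simp only [sub_nonneg]
          exact_mod_cast le_trans hin hni')]
      rw [habs] at hq
      have h1 : a⁻¹ * ((i':ℝ) - i) ≤ 2*Λ + b₁ := by linarith
      calc ((i':ℝ) - i) = a * (a⁻¹ * ((i':ℝ) - i)) := by field_simp
        _ ≤ a * (2*Λ + b₁) := mul_le_mul_of_nonneg_left h1 ha.le
    have hyni : dist (y n) (y i) ≤ κ * (a * (2*Λ + b₁)) := by
      have hchain := chain_dist hstep i (n - i)
      rw [show i + (n - i) = n by omega] at hchain
      -- hchain : dist (y i) (y n) ≤ κ * (n-i)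
      have hcast : ((n - i : ℕ):ℝ) ≤ a * (2*Λ + b₁) := by
        have h1 : ((n - i : ℕ):ℝ) = (n:ℝ) - i := by
          rw [Nat.cast_sub hin]
        have h2 : (n:ℝ) ≤ (i':ℝ) := by exact_mod_cast hni'
        rw [h1]; linarith
      calc dist (y n) (y i) = dist (y i) (y n) := dist_comm _ _
        _ ≤ κ * ((n - i : ℕ):ℝ) := hchain
        _ ≤ κ * (a * (2*Λ + b₁)) := mul_le_mul_of_nonneg_left hcast hκ
    refine ⟨s₁, hs₁mem, ?_⟩
    calc dist (y n) (ρ s₁) ≤ dist (y n) (y i) + dist (y i) (ρ s₁) := dist_triangle _ _ _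
      _ ≤ κ * (a * (2*Λ + b₁)) + Λ := add_le_add hyni (by rw [dist_comm]; exact hdi)
      _ = Λ + κ * (a * (2*Λ + b₁)) := by ring

end Morse2
section HypMain

variable {X G : Type*} [MetricSpace X] [Group G] [MulAction G X]

set_option maxHeartbeats 1000000 in
lemma hyp_main (hGS : GeodesicSpace X) {δ : ℝ} (hδ0 : 0 ≤ δ) (hslim : SlimTriangles X δ)
    (hiso : IsometricAction G X) {g : G} (hQI : QIHyperbolic X g)
    {γ : ℝ → X} (hattr : AttractsTo g γ) (x : X) :
    (∀ h : G, AsympRays (fun t => h • γ t) γ ↔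
      ∃ C : ℝ, ∀ n : ℕ, dist (h • (g ^ n • x)) (g ^ n • x) ≤ C) ∧
    (∃ c A B : ℝ, 0 ≤ A ∧ 0 ≤ B ∧
      ∀ h : G, AsympRays (fun t => h • γ t) γ →
        ∃ n₀ : ℕ, (n₀ : ℝ) ≤ A * dist (h • x) x + B ∧
          ∀ n : ℕ, n₀ ≤ n → dist (h • (g ^ n • x)) (g ^ n • x) ≤ dist (h • x) x + c) := by
  obtain ⟨hray, hconv⟩ := hattr
  have hsmul : ∀ (h : G) (u v : X), dist (h • u) (h • v) = dist u v :=
    fun h u v => (hiso h).dist_eq u v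
  set o := γ 0 with hodef
  set y : ℕ → X := fun n => g ^ n • x with hydef
  have hy0 : y 0 = x := by rw [hydef]; simp
  set D₀ := dist (y 0) o with hD₀def
  have hD₀0 : 0 ≤ D₀ := dist_nonneg
  obtain ⟨htend, C, hC⟩ := hconv x
  have htend' : Filter.Tendsto (fun n => dist o (y n)) Filter.atTop Filter.atTop := htend
  -- step bound
  set κ := dist x (g • x) with hκdef
  have hκ0 : 0 ≤ κ := dist_nonneg
  have hstep : ∀ j : ℕ, dist (y j) (y (j+1)) ≤ κ := by
    intro j
    have heq : y (j+1) = g ^ j • (g • x) := by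
      show g ^ (j+1) • x = g ^ j • (g • x)
      rw [pow_succ, mul_smul]
    have heq0 : y j = g ^ j • x := rfl
    rw [heq, heq0, hsmul]
  -- QI lower bound
  obtain ⟨x₀, a, b, ha, hb, hQIx₀⟩ := hQI
  set b₁ := b + 2 * dist x x₀ with hb₁def
  have hb₁0 : 0 ≤ b₁ := by have := dist_nonneg (x := x) (y := x₀); linarith
  have hQIy : ∀ i j : ℕ, a⁻¹ * |(i:ℝ) - (j:ℝ)| - b₁ ≤ dist (y i) (y j) := by
    intro i j
    have h1 := (hQIx₀ (i:ℤ) (j:ℤ)).1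
    rw [zpow_natCast, zpow_natCast] at h1
    push_cast at h1
    have h2 : dist (g ^ i • x₀) (g ^ j • x₀) ≤ dist (y i) (y j) + 2 * dist x x₀ := by
      calc dist (g ^ i • x₀) (g ^ j • x₀)
          ≤ dist (g ^ i • x₀) (g ^ i • x) + dist (g ^ i • x) (g ^ j • x)
            + dist (g ^ j • x) (g ^ j • x₀) := dist_triangle4 _ _ _ _
        _ = dist x₀ x + dist (y i) (y j) + dist x x₀ := by
            rw [hsmul, hsmul]
        _ = dist (y i) (y j) + 2 * dist x x₀ := by rw [dist_comm x₀ x]; ring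
    rw [hb₁def]
    linarith
  -- geodesics from o to orbit (for convergence) and along the orbit (for Morse)
  choose σ hσ using fun n => hGS (γ 0) (g ^ n • x)
  choose ρ hρ using fun m => hGS (y 0) (y m)
  -- Morse lemma, both halves
  obtain ⟨Λ, hΛ0, hhalf1⟩ := morse_half1 (δ := δ) hGS hslim hδ0 ha hb₁0 hκ0 y hstep hQIy
  set Λ' := Λ + κ * (a * (2*Λ + b₁)) with hΛ'def
  have hΛ'0 : 0 ≤ Λ' := by
    have h2 : 0 ≤ κ * (a * (2*Λ + b₁)) :=
      mul_nonneg hκ0 (mul_nonneg ha.le (by linarith))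
    rw [hΛ'def]; linarith
  have hhalf2 : ∀ m n : ℕ, n ≤ m →
      ∃ u ∈ Set.Icc (0:ℝ) (dist (y 0) (y m)), dist (y n) (ρ m u) ≤ Λ' :=
    fun m n hnm => morse_half2 (δ := δ) ha hΛ0 y hstep hQIy m _ (ρ m) (hρ m)
      (hhalf1 m _ (ρ m) (hρ m)) n hnm
  set Λ'' := Λ' + (4*δ + D₀) with hΛ''def
  set K := 2 * Λ'' + C with hKdef
  -- (F1): the orbit fellow-travels the ray γ
  have hF1 : ∃ N : ℕ, ∀ n : ℕ, N ≤ n → dist (y n) (γ (dist o (y n))) ≤ K := by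
    have hev : ∀ᶠ n in Filter.atTop, δ + Λ' + 2*D₀ + 1 ≤ dist o (y n) :=
      htend'.eventually_ge_atTop _
    obtain ⟨N, hN⟩ := Filter.eventually_atTop.mp hev
    refine ⟨N, fun n hn => ?_⟩
    set tn := dist o (y n) with htndef
    have htn1 : δ + Λ' + 2*D₀ + 1 ≤ tn := hN n hn
    have htn0 : 0 ≤ tn := dist_nonneg
    -- choose m
    have hev2 : ∀ᶠ m in Filter.atTop, dist (σ m tn) (γ tn) ≤ C := hC tn htn0 σ hσ
    have hev3 : ∀ᶠ m in Filter.atTop,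
        tn + Λ' + 2*D₀ + δ + 1 ≤ dist o (y m) :=
      htend'.eventually_ge_atTop _
    have hev4 : ∀ᶠ m in Filter.atTop, n ≤ m := Filter.eventually_ge_atTop n
    obtain ⟨m, hm2, hm3, hm4⟩ := (hev2.and (hev3.and hev4)).exists
    set tm := dist o (y m) with htmdef
    have htm : tn + Λ' + 2*D₀ + δ + 1 ≤ tm := hm3
    set Am := dist (y 0) (y m) with hAmdef
    have hAmtm1 : tm - D₀ ≤ Am := by
      have h := dist_triangle o (y 0) (y m)
      rw [dist_comm o (y 0)] at h
      have h' : tm ≤ D₀ + Am := h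
      linarith
    have hAmtm2 : Am ≤ tm + D₀ := by
      have := dist_triangle (y 0) o (y m)
      rw [← hD₀def, ← htmdef, ← hAmdef] at this
      linarith
    -- get the shadow point
    obtain ⟨u, humem, hushadow⟩ := hhalf2 m n hm4
    have hu0 : 0 ≤ u := humem.1
    have hudist : dist (y 0) (ρ m u) = u := by
      have hh := seg_param (hρ m) (Set.left_mem_Icc.2 (hρ m).1) humem
      rw [(hρ m).2.1] at hh
      rw [hh, zero_sub, abs_neg, abs_of_nonneg hu0]
    have hdyn : |dist (y 0) (y n) - tn| ≤ D₀ := abs_dist_sub_le (y 0) o (y n)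
    have huyn : |u - dist (y 0) (y n)| ≤ Λ' := by
      have := abs_dist_sub_le (ρ m u) (y n) (y 0)
      rw [dist_comm (ρ m u) (y 0), hudist, dist_comm (y n) (y 0)] at this
      exact le_trans this (by rw [dist_comm]; exact hushadow)
    have hun1 : tn - D₀ - Λ' ≤ u := by
      have h1 := (abs_le.mp hdyn).1
      have h2 := (abs_le.mp huyn).1
      linarith
    have hun2 : u ≤ tn + D₀ + Λ' := by
      have h1 := (abs_le.mp hdyn).2
      have h2 := (abs_le.mp huyn).2
      linarith
    -- compare the two geodesics ρ m and σ m
    have hσm : IsGeodesicSegment (σ m) 0 (dist o (y m)) o (y m) := hσ m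
    have hclose : dist (ρ m u) (σ m u) ≤ 4*δ + D₀ := by
      refine geodesics_close hGS hslim hδ0 (hρ m) hσm ?_ ?_ ?_
      · rw [dist_comm (y 0) o] at hD₀def ⊢
        rw [← hD₀def]
        linarith
      · rw [dist_self, ← hAmdef]
        linarith
      · rw [← htmdef]; linarith
    have humem2 : u ∈ Set.Icc (0:ℝ) tm := ⟨hu0, by linarith⟩
    have htnmem : tn ∈ Set.Icc (0:ℝ) tm := ⟨htn0, by linarith⟩
    have hσu : dist o (σ m u) = u := by
      have hh := seg_param hσm (Set.left_mem_Icc.2 dist_nonneg) (by rw [← htmdef]; exact humem2)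
      rw [hσm.2.1] at hh
      rw [hh, zero_sub, abs_neg, abs_of_nonneg hu0]
    have hutn : |u - tn| ≤ Λ'' := by
      have h1 := abs_dist_sub_le (σ m u) (y n) o
      rw [dist_comm (σ m u) o, hσu, dist_comm (y n) o, ← htndef] at h1
      have h2 : dist (σ m u) (y n) ≤ Λ'' := by
        calc dist (σ m u) (y n) ≤ dist (σ m u) (ρ m u) + dist (ρ m u) (y n) :=
              dist_triangle _ _ _
          _ ≤ (4*δ + D₀) + Λ' := add_le_add (by rw [dist_comm]; exact hclose)
              (by rw [dist_comm]; exact hushadow)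
          _ = Λ'' := by rw [hΛ''def]; ring
      exact le_trans h1 h2
    have hσtn : dist (σ m u) (σ m tn) = |u - tn| := by
      have := seg_param hσm (by rw [← htmdef]; exact humem2) (by rw [← htmdef]; exact htnmem)
      exact this
    calc dist (y n) (γ tn)
        ≤ dist (y n) (ρ m u) + dist (ρ m u) (σ m u) + dist (σ m u) (σ m tn)
          + dist (σ m tn) (γ tn) := by
          have t1 := dist_triangle4 (y n) (ρ m u) (σ m u) (σ m tn)
          have t2 := dist_triangle (y n) (σ m tn) (γ tn)
          linarith
      _ ≤ Λ' + (4*δ + D₀) + Λ'' + C := by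
          refine add_le_add (add_le_add (add_le_add hushadow hclose) ?_) hm2
          rw [hσtn]; exact hutn
      _ = K := by rw [hKdef, hΛ''def]; ring
  obtain ⟨N, hF1⟩ := hF1
  set K' := max 0 K with hK'def
  have hK'0 : 0 ≤ K' := le_max_left _ _
  have hF1' : ∀ n : ℕ, N ≤ n → dist (y n) (γ (dist o (y n))) ≤ K' :=
    fun n hn => le_trans (hF1 n hn) (le_max_right _ _)
  -- (F2'): asymptotic rays come together
  have hF2 : ∀ h : G, AsympRays (fun t => h • γ t) γ →
      ∀ t : ℝ, δ + dist (γ 0) (h • γ 0) < t →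
        dist (γ t) (h • γ t) ≤ 4*δ + dist (γ 0) (h • γ 0) := by
    rintro h ⟨Ch, hCh⟩ t ht
    have he0 : 0 ≤ dist (γ 0) (h • γ 0) := dist_nonneg
    have hCh0 : 0 ≤ Ch := le_trans dist_nonneg (hCh 0 le_rfl)
    have ht0 : 0 ≤ t := by linarith
    set T := t + δ + Ch + 1 with hTdef
    have hT0 : 0 ≤ T := by linarith
    have hseg1 : IsGeodesicSegment γ 0 T (γ 0) (γ T) := ray_seg hray hT0
    have hseg2 : IsGeodesicSegment (fun u => h • γ u) 0 T (h • γ 0) (h • γ T) :=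
      seg_map (hiso h) hseg1
    refine geodesics_close hGS hslim hδ0 hseg1 hseg2 ht ?_ (by linarith)
    have hend : dist (γ T) (h • γ T) ≤ Ch := by
      rw [dist_comm]; exact hCh T hT0
    linarith
  set c := 2*K' + 4*δ + 2*D₀ with hcdef
  have hc0 : 0 ≤ c := by rw [hcdef]; linarith
  set Bc := (N:ℝ) + a*(δ + 3*D₀ + b₁) + 2 with hBcdef
  have hBc0 : 0 ≤ Bc := by
    rw [hBcdef]
    have : 0 ≤ a*(δ + 3*D₀ + b₁) := mul_nonneg ha.le (by linarith)
    positivity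
  -- the forward uniform bound
  have hFwd : ∀ h : G, AsympRays (fun t => h • γ t) γ →
      ∃ n₀ : ℕ, (n₀ : ℝ) ≤ a * dist (h • x) x + Bc ∧
        ∀ n : ℕ, n₀ ≤ n → dist (h • y n) (y n) ≤ dist (h • x) x + c := by
    intro h hstab
    have heₓ0 : 0 ≤ dist (h • x) x := dist_nonneg
    set e := dist (γ 0) (h • γ 0) with hedef
    have he0 : 0 ≤ e := dist_nonneg
    have heb : e ≤ dist (h • x) x + 2*D₀ := by
      have h1 : dist (h • x) (h • γ 0) = dist x (γ 0) := hsmul h x (γ 0)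
      have h2 : dist x (γ 0) = D₀ := by rw [hD₀def, hy0, hodef]
      calc e ≤ dist (γ 0) x + dist x (h • x) + dist (h • x) (h • γ 0) := dist_triangle4 _ _ _ _
        _ = dist (h • x) x + 2*D₀ := by
            rw [h1, h2, dist_comm (γ 0) x, h2, dist_comm x (h • x)]; ring
    set z := a * (δ + dist (h • x) x + 3*D₀ + b₁) with hzdef
    have hz0 : 0 ≤ z := mul_nonneg ha.le (by linarith)
    refine ⟨max N (⌈z⌉₊ + 1), ?_, ?_⟩
    · have h1 : (max N (⌈z⌉₊ + 1) : ℕ) ≤ N + (⌈z⌉₊ + 1) := by omega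
      have h1' : ((max N (⌈z⌉₊ + 1) : ℕ) : ℝ) ≤ (N:ℝ) + ((⌈z⌉₊ : ℝ) + 1) := by
        exact_mod_cast h1
      have h2 : (⌈z⌉₊ : ℝ) ≤ z + 1 := (Nat.ceil_lt_add_one hz0).le
      have h3 : z = a * dist (h • x) x + a*(δ + 3*D₀ + b₁) := by rw [hzdef]; ring
      rw [hBcdef]
      linarith
    · intro n hn
      have hnN : N ≤ n := le_trans (le_max_left _ _) hn
      have hnz : (⌈z⌉₊ + 1 : ℕ) ≤ n := le_trans (le_max_right _ _) hn
      set tn := dist o (y n) with htndef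
      have htne : δ + e < tn := by
        have h1 : z + 1 ≤ (n:ℝ) := by
          have hh : ((⌈z⌉₊ + 1 : ℕ):ℝ) ≤ (n:ℝ) := Nat.cast_le.mpr hnz
          have h2 := Nat.le_ceil z
          push_cast at hh
          linarith
        have hQI0n := hQIy 0 n
        have habs : |((0:ℕ):ℝ) - (n:ℝ)| = (n:ℝ) := by
          push_cast
          rw [zero_sub, abs_neg, abs_of_nonneg (Nat.cast_nonneg n)]
        rw [habs] at hQI0n
        have h4 : dist (y 0) (y n) ≤ tn + D₀ := by
          calc dist (y 0) (y n) ≤ dist (y 0) o + dist o (y n) := dist_triangle _ _ _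
            _ = tn + D₀ := by rw [← hD₀def, ← htndef]; ring
        have h5 : a⁻¹ * (n:ℝ) ≤ tn + D₀ + b₁ := by linarith
        have h6 : a * (δ + e + D₀ + b₁) ≤ z := by
          rw [hzdef]
          apply mul_le_mul_of_nonneg_left _ ha.le
          linarith
        have h7 : δ + e + D₀ + b₁ < a⁻¹ * (n:ℝ) := by
          have hlt : a * (δ + e + D₀ + b₁) < (n:ℝ) := by linarith
          calc δ + e + D₀ + b₁ = a⁻¹ * (a * (δ + e + D₀ + b₁)) := by field_simp
            _ < a⁻¹ * (n:ℝ) := mul_lt_mul_of_pos_left hlt (inv_pos.2 ha)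
        linarith
      have hF2n : dist (γ tn) (h • γ tn) ≤ 4*δ + e := hF2 h hstab tn htne
      have hOn : dist (y n) (γ tn) ≤ K' := hF1' n hnN
      calc dist (h • y n) (y n)
          ≤ dist (h • y n) (h • γ tn) + dist (h • γ tn) (γ tn) + dist (γ tn) (y n) :=
            dist_triangle4 _ _ _ _
        _ ≤ K' + (4*δ + e) + K' := by
            refine add_le_add (add_le_add ?_ ?_) ?_
            · rw [hsmul]; exact hOn
            · rw [dist_comm]; exact hF2n
            · rw [dist_comm]; exact hOn
        _ ≤ dist (h • x) x + c := by rw [hcdef]; linarith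
  constructor
  · intro h
    constructor
    · -- stabilizing ⇒ bounded
      intro hstab
      obtain ⟨n₀, _, hbd⟩ := hFwd h hstab
      refine ⟨dist (h • x) x + c
        + Finset.sum (Finset.range n₀) (fun j => dist (h • y j) (y j)), fun n => ?_⟩
      have hsum0 : 0 ≤ Finset.sum (Finset.range n₀) (fun j => dist (h • y j) (y j)) :=
        Finset.sum_nonneg (fun _ _ => dist_nonneg)
      show dist (h • y n) (y n) ≤ _
      rcases le_or_gt n₀ n with hcase | hcase
      · have := hbd n hcase
        linarith
      · have hterm : dist (h • y n) (y n)
            ≤ Finset.sum (Finset.range n₀) (fun j => dist (h • y j) (y j)) :=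
          Finset.single_le_sum (f := fun j => dist (h • y j) (y j))
            (fun j _ => dist_nonneg) (Finset.mem_range.mpr hcase)
        have : 0 ≤ dist (h • x) x + c := by
          have := dist_nonneg (x := h • x) (y := x)
          linarith
        linarith
    · -- bounded ⇒ stabilizing
      rintro ⟨C₀, hC₀⟩
      have hC₀' : ∀ n : ℕ, dist (h • y n) (y n) ≤ C₀ := hC₀
      have hC₀0 : 0 ≤ C₀ := le_trans dist_nonneg (hC₀' 0)
      set e := dist (γ 0) (h • γ 0) with hedef
      have he0 : 0 ≤ e := dist_nonneg
      set T₀ := C₀ + δ + e + 1 with hT₀def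
      refine ⟨max (e + 2*T₀) (2*C + 4*δ + e), fun t ht => ?_⟩
      show dist (h • γ t) (γ t) ≤ _
      rcases le_or_gt t T₀ with hcase | hcase
      · have hb : dist (h • γ t) (γ t) ≤ e + 2*t := by
          have h1 : dist (h • γ t) (h • γ 0) = dist (γ t) (γ 0) := hsmul h _ _
          have h2 : dist (γ t) (γ 0) = t := by
            rw [ray_dist hray ht le_rfl, sub_zero, abs_of_nonneg ht]
          calc dist (h • γ t) (γ t)
              ≤ dist (h • γ t) (h • γ 0) + dist (h • γ 0) (γ 0) + dist (γ 0) (γ t) :=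
                dist_triangle4 _ _ _ _
            _ = t + e + t := by
                rw [h1, h2, dist_comm (h • γ 0) (γ 0), ← hedef, dist_comm (γ 0) (γ t), h2]
            _ = e + 2*t := by ring
        refine le_trans hb (le_trans ?_ (le_max_left _ _))
        linarith
      · have ht0 : 0 ≤ t := by rw [hT₀def] at hcase; linarith
        have hev1 : ∀ᶠ n in Filter.atTop, dist (σ n t) (γ t) ≤ C := hC t ht0 σ hσ
        have hev2 : ∀ᶠ n in Filter.atTop, t + δ + C₀ + 1 ≤ dist o (y n) :=
          htend'.eventually_ge_atTop _
        obtain ⟨n, h1, h2⟩ := (hev1.and hev2).exists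
        set tn := dist o (y n) with htndef
        have hσn : IsGeodesicSegment (σ n) 0 tn (γ 0) (y n) := hσ n
        have hmid : dist (σ n t) (h • σ n t) ≤ 4*δ + e := by
          refine geodesics_close hGS hslim hδ0 hσn (seg_map (hiso h) hσn) ?_ ?_ (by linarith)
          · rw [← hedef, hT₀def] at *
            linarith
          · have : dist (y n) (h • y n) ≤ C₀ := by rw [dist_comm]; exact hC₀' n
            linarith
        calc dist (h • γ t) (γ t)
            ≤ dist (h • γ t) (h • σ n t) + dist (h • σ n t) (σ n t) + dist (σ n t) (γ t) :=
              dist_triangle4 _ _ _ _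
          _ ≤ C + (4*δ + e) + C := by
              refine add_le_add (add_le_add ?_ ?_) h1
              · rw [hsmul, dist_comm]; exact h1
              · rw [dist_comm]; exact hmid
          _ ≤ max (e + 2*T₀) (2*C + 4*δ + e) := le_trans (by linarith) (le_max_right _ _)
  · -- part 2
    refine ⟨c, a, Bc, ha.le, hBc0, fun h hstab => ?_⟩
    obtain ⟨n₀, hn₀, hbd⟩ := hFwd h hstab
    exact ⟨n₀, hn₀, fun n hn => hbd n hn⟩

end HypMain
/-- Let `g` be a hyperbolic isometry of an NPC space with attracting
point `ξ` (the boundary point of `γ`), and let `x ∈ X`. An isometry `h` stabilizes `ξ`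
iff the sequence `d(h·gⁿx, gⁿx)` is bounded over `n ≥ 0`; moreover there are constants
`c` (independent of `h`) and `A, B ≥ 0` such that every `h` stabilizing `ξ` satisfies
`d(h·gⁿx, gⁿx) ≤ d(hx, x) + c` for all `n ≥ n₀`, for some `n₀ ≤ A·d(hx,x) + B`
(a bound of linear growth in `d(hx, x)`). -/
theorem stabilizes_attracting_point_iff_bounded
    {X G : Type*} [MetricSpace X] [Group G] [MulAction G X]
    (hNPC : NPCSpace X) (hiso : IsometricAction G X)
    (g : G) (hhyp : IsHyperbolicIsom X g) (γ : ℝ → X) (hattr : AttractsTo g γ)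
    (x : X) :
    (∀ h : G, AsympRays (fun t => h • γ t) γ ↔
      ∃ C : ℝ, ∀ n : ℕ, dist (h • (g ^ n • x)) (g ^ n • x) ≤ C) ∧
    (∃ c A B : ℝ, 0 ≤ A ∧ 0 ≤ B ∧
      ∀ h : G, AsympRays (fun t => h • γ t) γ →
        ∃ n₀ : ℕ, (n₀ : ℝ) ≤ A * dist (h • x) x + B ∧
          ∀ n : ℕ, n₀ ≤ n → dist (h • (g ^ n • x)) (g ^ n • x) ≤ dist (h • x) x + c) := by
  rcases hhyp with ⟨hcomp, hcat, L, hLline, k, hk, htr⟩ | ⟨hprop, ⟨δ, hδ0, hslim⟩, hqi⟩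
  · obtain ⟨hiff, hpart2⟩ := cat0_main hcat hiso hLline hk htr hattr x
    refine ⟨hiff, 4 * dist x (L 0), 0, 0, le_rfl, le_rfl, fun h hs => ?_⟩
    exact ⟨0, by norm_num, fun n _ => hpart2 h hs n⟩
  · exact hyp_main hNPC.1 hδ0 hslim hiso hqi hattr x
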